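/- arXiv:2107.02116 — 3 statements merged into one kernel-verified Lean document; each statement's English description precedes it below -/
import Mathlib

section
/- The function μ on positive integers defined by μ(k) = 2·k^(k-2)/(e^k · k!) is a probability measure, i.e. Σ_{k≥1} 2·k^(k-2)/(e^k·k!) = 1. -/
open Finset Set Topology Filter

noncomputable def cc : ℕ → ℝ := fun k => if k = 0 then 0 else (k:ℝ)^(k-2) / (k.factorial : ℝ)

lemma cc_nonneg (k : ℕ) : 0 ≤ cc k := by
  unfold cc; split <;> positivity

lemma cc_zero : cc 0 = 0 := rfl

-- k^k ≤ k! * e^k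
lemma pow_le_fact_mul_exp (k : ℕ) : (k:ℝ)^k ≤ (k.factorial : ℝ) * Real.exp 1 ^ k := by
  have h1 : ((k:ℝ))^k / (k.factorial : ℝ) ≤ Real.exp k := by
    calc ((k:ℝ))^k / (k.factorial : ℝ)
        ≤ ∑ i ∈ range (k+1), (k:ℝ)^i / (i.factorial : ℝ) := by
          refine Finset.single_le_sum (f := fun i => (k:ℝ)^i / (i.factorial : ℝ))
            (fun i _ => by positivity) (self_mem_range_succ k)
      _ ≤ Real.exp k := Real.sum_le_exp_of_nonneg (by positivity) _
  have hexp : Real.exp (k:ℝ) = Real.exp 1 ^ k := by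
    rw [← Real.exp_nat_mul]; norm_num
  rw [hexp] at h1
  have hf : (0:ℝ) < (k.factorial : ℝ) := by positivity
  calc (k:ℝ)^k = (k:ℝ)^k / (k.factorial : ℝ) * (k.factorial : ℝ) := by field_simp
    _ ≤ Real.exp 1 ^ k * (k.factorial : ℝ) := by
        exact mul_le_mul_of_nonneg_right h1 hf.le
    _ = (k.factorial : ℝ) * Real.exp 1 ^ k := by ring

lemma pow_collapse {k : ℕ} (hk : 1 ≤ k) : (k:ℝ)^(k-2) * (k:ℝ)^2 = (k:ℝ)^k := by
  match k, hk with
  | 1, _ => norm_num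
  | (m+2), _ => rw [← pow_add]; norm_num

lemma cc_le (k : ℕ) : cc k * ((k:ℝ))^2 ≤ Real.exp 1 ^ k := by
  rcases Nat.eq_zero_or_pos k with h | h
  · subst h; simp [cc_zero]
  · unfold cc
    rw [if_neg (by omega)]
    rw [div_mul_eq_mul_div, pow_collapse h, div_le_iff₀ (by positivity)]
    calc (k:ℝ)^k ≤ (k.factorial : ℝ) * Real.exp 1 ^ k := pow_le_fact_mul_exp k
      _ = Real.exp 1 ^ k * (k.factorial : ℝ) := by ring

-- the main bound: cc k * r^k ≤ (e*r)^k / k^2  for r ≥ 0, k ≥ 1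
lemma cc_mul_pow_le {r : ℝ} (hr : 0 ≤ r) {k : ℕ} (hk : 1 ≤ k) :
    cc k * r^k ≤ (Real.exp 1 * r)^k / (k:ℝ)^2 := by
  have hk2 : (0:ℝ) < (k:ℝ)^2 := by positivity
  rw [div_eq_mul_inv, ← mul_le_mul_iff_of_pos_right hk2]
  calc cc k * r^k * (k:ℝ)^2 = (cc k * (k:ℝ)^2) * r^k := by ring
    _ ≤ Real.exp 1 ^ k * r^k := mul_le_mul_of_nonneg_right (cc_le k) (by positivity)
    _ = (Real.exp 1 * r)^k := (mul_pow _ _ _).symm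
    _ = (Real.exp 1 * r)^k * ((k:ℝ)^2)⁻¹ * (k:ℝ)^2 := by
        field_simp

lemma altsum : ∀ (d n : ℕ), d < n →
    ∑ k ∈ range (n+1), (-1:ℝ)^k * (n.choose k : ℝ) * (k:ℝ)^d = 0 := by
  intro d
  induction d using Nat.strong_induction_on with
  | _ d IH =>
    intro n hdn
    match d with
    | 0 =>
      have h0 : n ≠ 0 := by omega
      have h := Int.alternating_sum_range_choose_of_ne h0
      have h2 : ((∑ i ∈ range (n + 1), (-1:ℤ) ^ i * ↑(n.choose i) : ℤ) : ℝ) = 0 := by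
        rw [h]; norm_num
      push_cast at h2
      simpa using h2
    | (e+1) =>
      have hn1 : 1 ≤ n := by omega
      calc ∑ k ∈ range (n+1), (-1:ℝ)^k * (n.choose k : ℝ) * (k:ℝ)^(e+1)
          = ∑ j ∈ range n, (-1:ℝ)^(j+1) * (n.choose (j+1) : ℝ) * ((j:ℝ)+1)^(e+1) := by
            rw [Finset.sum_range_succ']
            simp
        _ = ∑ j ∈ range n, ∑ i ∈ range (e+1),
              (-(n:ℝ)) * (e.choose i : ℝ) *
                ((-1:ℝ)^j * ((n-1).choose j : ℝ) * (j:ℝ)^i) := by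
            refine Finset.sum_congr rfl fun j _ => ?_
            have hc : (n.choose (j+1) : ℝ) * ((j:ℝ)+1) = (n:ℝ) * ((n-1).choose j : ℝ) := by
              have h := Nat.add_one_mul_choose_eq (n-1) j
              have hn : n - 1 + 1 = n := by omega
              rw [hn] at h
              have := congrArg (fun m : ℕ => (m : ℝ)) h
              push_cast at this
              linarith [this]
            have hp : ((j:ℝ)+1)^e = ∑ i ∈ range (e+1), (j:ℝ)^i * (e.choose i : ℝ) := by
              have := add_pow (j:ℝ) 1 e
              simpa using this
            calc (-1:ℝ)^(j+1) * (n.choose (j+1) : ℝ) * ((j:ℝ)+1)^(e+1)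
                = (-1:ℝ)^(j+1) * ((n.choose (j+1) : ℝ) * ((j:ℝ)+1)) * ((j:ℝ)+1)^e := by ring
              _ = (-1:ℝ)^(j+1) * ((n:ℝ) * ((n-1).choose j : ℝ)) *
                    (∑ i ∈ range (e+1), (j:ℝ)^i * (e.choose i : ℝ)) := by rw [hc, hp]
              _ = ∑ i ∈ range (e+1), (-(n:ℝ)) * (e.choose i : ℝ) *
                    ((-1:ℝ)^j * ((n-1).choose j : ℝ) * (j:ℝ)^i) := by
                  rw [Finset.mul_sum]
                  refine Finset.sum_congr rfl fun i _ => ?_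
                  rw [pow_succ]
                  ring
        _ = ∑ i ∈ range (e+1), (-(n:ℝ)) * (e.choose i : ℝ) *
              (∑ j ∈ range n, (-1:ℝ)^j * ((n-1).choose j : ℝ) * (j:ℝ)^i) := by
            rw [Finset.sum_comm]
            exact Finset.sum_congr rfl fun i _ => (Finset.mul_sum _ _ _).symm
        _ = 0 := by
            refine Finset.sum_eq_zero fun i hi => ?_
            have hie : i ≤ e := Nat.lt_succ_iff.mp (mem_range.mp hi)
            have hrange : n = (n-1) + 1 := by omega
            have hz : ∑ j ∈ range n, (-1:ℝ)^j * ((n-1).choose j : ℝ) * (j:ℝ)^i = 0 := by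
              rw [hrange]
              exact IH i (by omega) (n-1) (by omega)
            rw [hz, mul_zero]

noncomputable def AA (n : ℕ) : ℝ :=
  ∑ p ∈ Finset.HasAntidiagonal.antidiagonal n, cc p.1 * (-(p.1:ℝ))^p.2 / (p.2.factorial : ℝ)

lemma pow_collapse2 {k n : ℕ} (hk : 1 ≤ k) (hkn : k ≤ n) :
    (k:ℝ)^(k-2) * (k:ℝ)^(n-k) = (k:ℝ)^(n-2) := by
  match k, hk with
  | 1, _ => norm_num
  | (m+2), _ =>
    rw [← pow_add]
    congr 1
    omega

lemma AA_zero : AA 0 = 0 := by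
  simp [AA, cc]

lemma AA_one : AA 1 = 1 := by
  rw [AA, Finset.Nat.sum_antidiagonal_eq_sum_range_succ_mk]
  simp [Finset.sum_range_succ, cc]

lemma AA_two : AA 2 = -(1/2) := by
  rw [AA, Finset.Nat.sum_antidiagonal_eq_sum_range_succ_mk]
  simp [Finset.sum_range_succ, cc]
  norm_num [Nat.factorial]

lemma AA_eq_zero {n : ℕ} (hn : 3 ≤ n) : AA n = 0 := by
  have hfac : (0:ℝ) < (n.factorial : ℝ) := by positivity
  have key : AA n * (n.factorial : ℝ)
      = (-1:ℝ)^n * ∑ k ∈ range (n+1), (-1:ℝ)^k * (n.choose k : ℝ) * (k:ℝ)^(n-2) := by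
    rw [AA, Finset.Nat.sum_antidiagonal_eq_sum_range_succ_mk, Finset.sum_mul, Finset.mul_sum]
    refine Finset.sum_congr rfl fun k hk => ?_
    have hkn : k ≤ n := Nat.lt_succ_iff.mp (mem_range.mp hk)
    rcases Nat.eq_zero_or_pos k with h0 | h1
    · subst h0
      simp [cc, zero_pow (show n - 2 ≠ 0 by omega)]
    · -- k ≥ 1
      have hccn : cc k = (k:ℝ)^(k-2) / (k.factorial : ℝ) := by
        unfold cc; rw [if_neg (by omega : ¬ k = 0)]
      rw [hccn]
      have hsign : (-(k:ℝ))^(n-k) = (-1:ℝ)^(n-k) * (k:ℝ)^(n-k) := by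
        rw [neg_pow]
      have hsign2 : (-1:ℝ)^(n-k) = (-1:ℝ)^n * (-1:ℝ)^k := by
        have h1 : (-1:ℝ)^(n-k) * (-1:ℝ)^k = (-1:ℝ)^n := by
          rw [← pow_add]; congr 1; omega
        have h2 : ((-1:ℝ)^k) * ((-1:ℝ)^k) = 1 := by
          rw [← pow_add, ← two_mul, pow_mul]; norm_num
        calc (-1:ℝ)^(n-k) = (-1:ℝ)^(n-k) * (((-1:ℝ)^k) * ((-1:ℝ)^k)) := by rw [h2, mul_one]
          _ = (-1:ℝ)^n * (-1:ℝ)^k := by rw [← mul_assoc, h1]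
      have hchoose : (n.choose k : ℝ) * (k.factorial : ℝ) * ((n-k).factorial : ℝ)
          = (n.factorial : ℝ) := by
        have := Nat.choose_mul_factorial_mul_factorial hkn
        exact_mod_cast congrArg (fun m : ℕ => (m:ℝ)) this
      have hcol := pow_collapse2 h1 hkn
      have hkf : (k.factorial : ℝ) ≠ 0 := by positivity
      have hnkf : ((n-k).factorial : ℝ) ≠ 0 := by positivity
      rw [hsign, hsign2]
      have hA : (k:ℝ)^(k-2) * (k:ℝ)^(n-k) * (n.factorial:ℝ)
          = (k:ℝ)^(n-2) * ((n.choose k:ℝ) * (k.factorial:ℝ) * ((n-k).factorial:ℝ)) := by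
        rw [hcol, hchoose]
      field_simp
      linear_combination hA
  have h0 : AA n * (n.factorial : ℝ) = 0 := by
    rw [key, altsum (n-2) n (by omega), mul_zero]
  exact (mul_eq_zero.mp h0).resolve_right (by positivity)

lemma exp_tsum (y : ℝ) : ∑' j : ℕ, y^j / (j.factorial : ℝ) = Real.exp y := by
  rw [Real.exp_eq_exp_ℝ, NormedSpace.exp_eq_tsum_div]

lemma exp_one_lt_three : Real.exp 1 < 3 := by
  have := Real.exp_one_lt_d9
  linarith

noncomputable def ff : ℝ → ℝ := (FormalMultilinearSeries.ofScalars ℝ cc).sum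

lemma ff_eq (x : ℝ) : ff x = ∑' k : ℕ, cc k * x^k := by
  unfold ff FormalMultilinearSeries.sum
  exact tsum_congr fun n => by
    rw [FormalMultilinearSeries.ofScalars_apply_eq, smul_eq_mul]

noncomputable def hh : ℝ → ℝ := fun t => t * Real.exp (-t)
noncomputable def gg : ℝ → ℝ := fun t => ff (hh t)

set_option maxHeartbeats 1000000 in
lemma key_small {t : ℝ} (ht : |t| ≤ 1/10) : gg t = t - t^2/2 := by
  classical
  set F : ℕ × ℕ → ℝ :=
    fun p => cc p.1 * t^p.1 * ((-(p.1:ℝ)*t)^p.2 / (p.2.factorial : ℝ)) with hF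
  have habs : ∀ p : ℕ × ℕ, ‖F p‖
      = cc p.1 * |t|^p.1 * (((p.1:ℝ)*|t|)^p.2 / (p.2.factorial : ℝ)) := by
    rintro ⟨k, j⟩
    simp only [hF, Real.norm_eq_abs, abs_mul, abs_div, abs_pow, abs_neg, abs_mul,
      Nat.abs_cast, abs_of_nonneg (cc_nonneg k),
      abs_of_nonneg (Nat.cast_nonneg (j.factorial) : (0:ℝ) ≤ j.factorial)]
  have hrow : ∀ k : ℕ, Summable (fun j => ‖F (k, j)‖) := by
    intro k
    rw [show (fun j => ‖F (k, j)‖)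
        = fun j => cc k * |t|^k * (((k:ℝ)*|t|)^j / (j.factorial : ℝ)) from
      funext fun j => habs (k, j)]
    exact (Real.summable_pow_div_factorial _).mul_left _
  have hrowsum : ∀ k : ℕ, ∑' j : ℕ, ‖F (k, j)‖ = cc k * (|t| * Real.exp |t|)^k := by
    intro k
    calc ∑' j : ℕ, ‖F (k, j)‖
        = ∑' j : ℕ, (cc k * |t|^k) * (((k:ℝ)*|t|)^j / (j.factorial : ℝ)) := by
          exact tsum_congr fun j => habs (k, j)
      _ = (cc k * |t|^k) * Real.exp ((k:ℝ)*|t|) := by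
          rw [tsum_mul_left, exp_tsum]
      _ = cc k * (|t| * Real.exp |t|)^k := by
          rw [Real.exp_nat_mul, mul_pow]; ring
  have hq : Real.exp 1 * (|t| * Real.exp |t|) ≤ 9/10 := by
    have h1 : Real.exp |t| ≤ Real.exp 1 := Real.exp_le_exp.mpr (le_trans ht (by norm_num))
    have h2 : |t| * Real.exp |t| ≤ (1/10) * 3 :=
      mul_le_mul ht (h1.trans exp_one_lt_three.le) (Real.exp_pos _).le (by norm_num)
    nlinarith [Real.exp_pos 1, exp_one_lt_three, abs_nonneg t, Real.exp_pos |t|]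
  have hcolsum : Summable (fun k : ℕ => ∑' j : ℕ, ‖F (k, j)‖) := by
    have hgeo : Summable (fun k : ℕ => (9/10:ℝ)^k) :=
      summable_geometric_of_lt_one (by norm_num) (by norm_num)
    refine Summable.of_nonneg_of_le (fun k => tsum_nonneg (fun j => norm_nonneg _))
      (fun k => ?_) hgeo
    · rw [hrowsum k]
      rcases Nat.eq_zero_or_pos k with h0 | h1
      · subst h0; simp [cc_zero]
      · have hb := cc_mul_pow_le (r := |t| * Real.exp |t|) (by positivity) h1
        have hk2 : (1:ℝ) ≤ (k:ℝ)^2 := by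
          have : (1:ℝ) ≤ (k:ℝ) := by exact_mod_cast h1
          nlinarith
        calc cc k * (|t| * Real.exp |t|)^k
            ≤ (Real.exp 1 * (|t| * Real.exp |t|))^k / (k:ℝ)^2 := hb
          _ ≤ (Real.exp 1 * (|t| * Real.exp |t|))^k := by
              apply div_le_self (by positivity) hk2
          _ ≤ (9/10 : ℝ)^k := by
              apply pow_le_pow_left₀ (by positivity) hq
  have hFnormsum : Summable (fun p : ℕ × ℕ => ‖F p‖) := by
    rw [summable_prod_of_nonneg (fun p => norm_nonneg (F p))]
    exact ⟨hrow, hcolsum⟩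
  have hFsum : Summable F := hFnormsum.of_norm
  -- step 1 : gg t = ∑' k, ∑' j, F (k, j)
  have step1 : gg t = ∑' p : ℕ × ℕ, F p := by
    rw [hFsum.tsum_prod]
    unfold gg
    rw [ff_eq]
    refine (tsum_congr fun k => ?_).symm
    calc ∑' j : ℕ, F (k, j)
        = ∑' j : ℕ, (cc k * t^k) * ((-(k:ℝ)*t)^j / (j.factorial : ℝ)) := rfl
      _ = (cc k * t^k) * Real.exp (-(k:ℝ)*t) := by rw [tsum_mul_left, exp_tsum]
      _ = cc k * (hh t)^k := by
          unfold hh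
          rw [show (-(k:ℝ)*t) = (k:ℝ) * (-t) by ring, Real.exp_nat_mul, mul_pow, mul_assoc]
  -- step 2 : regroup along antidiagonals
  have step2 : ∑' p : ℕ × ℕ, F p = ∑' n : ℕ, AA n * t^n := by
    rw [← Finset.HasAntidiagonal.sigmaAntidiagonalEquivProd.tsum_eq F]
    have hs : Summable (fun x : (Σ n : ℕ, Finset.HasAntidiagonal.antidiagonal n) =>
        F (Finset.HasAntidiagonal.sigmaAntidiagonalEquivProd x)) :=
      Finset.HasAntidiagonal.sigmaAntidiagonalEquivProd.summable_iff.mpr hFsum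
    rw [hs.tsum_sigma]
    refine tsum_congr fun n => ?_
    calc ∑' (c : {p : ℕ × ℕ // p ∈ Finset.HasAntidiagonal.antidiagonal n}),
          F (Finset.HasAntidiagonal.sigmaAntidiagonalEquivProd ⟨n, c⟩)
        = ∑' (c : {p : ℕ × ℕ // p ∈ Finset.HasAntidiagonal.antidiagonal n}), F c.1 := by
          refine tsum_congr fun c => ?_
          simp [Finset.HasAntidiagonal.sigmaAntidiagonalEquivProd]
      _ = ∑ p ∈ Finset.HasAntidiagonal.antidiagonal n, F p := Finset.tsum_subtype _ F
      _ = AA n * t^n := by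
          unfold AA
          rw [Finset.sum_mul]
          refine Finset.sum_congr rfl fun p hp => ?_
          have hpn : p.1 + p.2 = n := Finset.HasAntidiagonal.mem_antidiagonal.mp hp
          simp only [hF]
          rw [mul_pow, ← hpn, pow_add]
          ring
  -- step 3 : compute
  have step3 : ∑' n : ℕ, AA n * t^n = t - t^2/2 := by
    rw [tsum_eq_sum (s := {1, 2}) ?h]
    · rw [Finset.sum_insert (by norm_num), Finset.sum_singleton, AA_one, AA_two]
      ring
    case h =>
      intro n hn
      simp only [Finset.mem_insert, Finset.mem_singleton] at hn
      push_neg at hn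
      rcases Nat.lt_or_ge n 3 with h3 | h3
      · interval_cases n
        · rw [AA_zero, zero_mul]
        · exact absurd rfl hn.1
        · exact absurd rfl hn.2
      · rw [AA_eq_zero h3, zero_mul]
  rw [step1, step2, step3]


lemma uu_le (k : ℕ) : cc k * Real.exp (-1) ^ k ≤ 1 / (k:ℝ)^2 := by
  rcases Nat.eq_zero_or_pos k with h0 | h1
  · subst h0; simp [cc_zero]
  · have h := cc_mul_pow_le (r := Real.exp (-1)) (Real.exp_pos _).le h1
    have he : Real.exp 1 * Real.exp (-1) = 1 := by
      rw [← Real.exp_add]; norm_num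
    rw [he, one_pow] at h
    exact h
lemma summable_uu : Summable (fun k : ℕ => cc k * Real.exp (-1) ^ k) := by
  refine Summable.of_nonneg_of_le (fun k => mul_nonneg (cc_nonneg k) (by positivity)) (fun k => uu_le k) ?_
  simpa using (Real.summable_one_div_nat_pow (p := 2)).mpr one_lt_two

lemma radius_ge : ENNReal.ofReal (Real.exp (-1)) ≤
    (FormalMultilinearSeries.ofScalars ℝ cc).radius := by
  have h : ENNReal.ofReal (Real.exp (-1)) = ((Real.exp (-1)).toNNReal : ENNReal) := rfl
  rw [h]
  apply FormalMultilinearSeries.le_radius_of_summable_norm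
  have : (fun n : ℕ => ‖FormalMultilinearSeries.ofScalars ℝ cc n‖ *
      ((Real.exp (-1)).toNNReal : ℝ) ^ n) = fun n => cc n * Real.exp (-1) ^ n := by
    funext n
    rw [FormalMultilinearSeries.ofScalars_norm, Real.norm_eq_abs, abs_of_nonneg (cc_nonneg n),
      Real.coe_toNNReal _ (Real.exp_pos _).le]
  rw [this]
  exact summable_uu

lemma hball : HasFPowerSeriesOnBall ff (FormalMultilinearSeries.ofScalars ℝ cc) 0
    (ENNReal.ofReal (Real.exp (-1))) := by
  have h0 : (0:ENNReal) < ENNReal.ofReal (Real.exp (-1)) := by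
    simp [ENNReal.ofReal_pos, Real.exp_pos]
  exact ((FormalMultilinearSeries.ofScalars ℝ cc).hasFPowerSeriesOnBall
    (lt_of_lt_of_le h0 radius_ge)).mono h0 radius_ge

lemma ff_analytic {x : ℝ} (hx : |x| < Real.exp (-1)) : AnalyticAt ℝ ff x := by
  apply hball.analyticAt_of_mem
  rw [EMetric.mem_ball, edist_dist, dist_zero_right, Real.norm_eq_abs,
    ← ENNReal.ofReal_lt_ofReal_iff_of_nonneg (abs_nonneg x)] at *
  exact hx

lemma hh_analytic (t : ℝ) : AnalyticAt ℝ hh t := by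
  have h1 : AnalyticAt ℝ (fun s : ℝ => s) t := analyticAt_id
  have h2 : AnalyticAt ℝ (fun s : ℝ => Real.exp (-s)) t := AnalyticAt.rexp h1.neg
  exact h1.mul h2

lemma hh_small {t : ℝ} (ht : t ∈ Ioo (-(1/10):ℝ) 1) : |hh t| < Real.exp (-1) := by
  obtain ⟨ht1, ht2⟩ := ht
  have hexp3 : (1:ℝ)/3 < Real.exp (-1) := by
    rw [Real.exp_neg]
    rw [div_lt_iff₀ (by norm_num : (0:ℝ) < 3)]
    rw [inv_mul_eq_div, lt_div_iff₀ (Real.exp_pos 1)]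
    nlinarith [exp_one_lt_three]
  rcases le_or_gt t 0 with h | h
  · have habs : |hh t| = -t * Real.exp (-t) := by
      unfold hh
      rw [abs_mul, abs_of_nonpos h, abs_of_pos (Real.exp_pos _)]
    rw [habs]
    have h1 : -t < 1/10 := by linarith
    have h2 : Real.exp (-t) ≤ Real.exp 1 := Real.exp_le_exp.mpr (by linarith)
    have h3 : -t * Real.exp (-t) ≤ (1/10) * Real.exp 1 :=
      mul_le_mul h1.le h2 (Real.exp_pos _).le (by norm_num)
    calc -t * Real.exp (-t) ≤ (1/10) * Real.exp 1 := h3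
      _ < 1/3 := by nlinarith [exp_one_lt_three, Real.exp_pos 1]
      _ < Real.exp (-1) := hexp3
  · have habs : |hh t| = t * Real.exp (-t) := by
      unfold hh
      rw [abs_mul, abs_of_pos h, abs_of_pos (Real.exp_pos _)]
    rw [habs]
    have hlt : t < Real.exp (t - 1) := by
      have := Real.add_one_lt_exp (x := t - 1) (by intro hc; rw [sub_eq_zero] at hc; exact absurd hc (ne_of_lt ht2))
      linarith
    calc t * Real.exp (-t) < Real.exp (t-1) * Real.exp (-t) :=
          mul_lt_mul_of_pos_right hlt (Real.exp_pos _)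
      _ = Real.exp (-1) := by rw [← Real.exp_add]; ring_nf

lemma gg_eq_on_Ico : ∀ t ∈ Ico (0:ℝ) 1, gg t = t - t^2/2 := by
  have hU : IsPreconnected (Ioo (-(1/10):ℝ) 1) := isPreconnected_Ioo
  have hgan : AnalyticOnNhd ℝ gg (Ioo (-(1/10):ℝ) 1) := by
    intro t ht
    exact (ff_analytic (hh_small ht)).comp (hh_analytic t)
  have hqan : AnalyticOnNhd ℝ (fun t : ℝ => t - t^2/2) (Ioo (-(1/10):ℝ) 1) := by
    intro t _
    exact analyticAt_id.sub ((analyticAt_id.pow 2).div analyticAt_const (by norm_num))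
  have h0 : (0:ℝ) ∈ Ioo (-(1/10):ℝ) 1 := by constructor <;> norm_num
  have hev : gg =ᶠ[nhds (0:ℝ)] (fun t => t - t^2/2) := by
    have : Metric.ball (0:ℝ) (1/10) ∈ nhds (0:ℝ) := Metric.ball_mem_nhds _ (by norm_num)
    filter_upwards [this] with s hs
    rw [Metric.mem_ball, Real.dist_eq, sub_zero] at hs
    exact key_small hs.le
  have := AnalyticOnNhd.eqOn_of_preconnected_of_eventuallyEq hgan hqan hU h0 hev
  intro t ht
  exact this ⟨by linarith [ht.1], ht.2⟩

lemma gg_cont : ContinuousOn gg (Icc (0:ℝ) 1) := by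
  have hmaps : MapsTo hh (Icc (0:ℝ) 1) (Icc (0:ℝ) (Real.exp (-1))) := by
    intro t ht
    obtain ⟨h0, h1⟩ := ht
    constructor
    · unfold hh; positivity
    · unfold hh
      have hle : t ≤ Real.exp (t - 1) := by
        have := Real.add_one_le_exp (t - 1)
        linarith
      calc t * Real.exp (-t) ≤ Real.exp (t-1) * Real.exp (-t) :=
            mul_le_mul_of_nonneg_right hle (Real.exp_pos _).le
        _ = Real.exp (-1) := by rw [← Real.exp_add]; ring_nf
  have hffc : ContinuousOn ff (Icc (0:ℝ) (Real.exp (-1))) := by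
    have heq : ∀ x ∈ Icc (0:ℝ) (Real.exp (-1)), ff x = ∑' k : ℕ, cc k * x^k :=
      fun x _ => ff_eq x
    refine ContinuousOn.congr ?_ heq
    refine (tendstoUniformlyOn_tsum summable_uu ?_).continuousOn
      (Filter.Eventually.of_forall fun n => ?_).frequently
    · rintro k x ⟨hx0, hx1⟩
      rw [Real.norm_eq_abs, abs_mul, abs_of_nonneg (cc_nonneg k), abs_pow,
        abs_of_nonneg hx0]
      exact mul_le_mul_of_nonneg_left (pow_le_pow_left₀ hx0 hx1 k) (cc_nonneg k)
    · exact continuousOn_finset_sum _ fun i _ => (continuousOn_const.mul (continuousOn_pow i))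
  exact hffc.comp (Continuous.continuousOn (continuous_id.mul (Real.continuous_exp.comp continuous_neg) : Continuous hh)) hmaps

lemma gg_one : gg 1 = 1/2 := by
  have hne : (𝓝[Ico (0:ℝ) 1] 1).NeBot := by
    rw [← mem_closure_iff_nhdsWithin_neBot, closure_Ico (by norm_num : (0:ℝ) ≠ 1)]
    exact ⟨by norm_num, le_refl 1⟩
  have h1 : Filter.Tendsto gg (𝓝[Ico (0:ℝ) 1] 1) (𝓝 (gg 1)) := by
    have := (gg_cont 1 (by constructor <;> norm_num)).tendsto
    exact this.mono_left (nhdsWithin_mono 1 Ico_subset_Icc_self)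
  have h2 : Filter.Tendsto gg (𝓝[Ico (0:ℝ) 1] 1) (𝓝 (1/2)) := by
    have hq : Filter.Tendsto (fun t : ℝ => t - t^2/2) (𝓝[Ico (0:ℝ) 1] 1) (𝓝 (1/2)) := by
      have : Filter.Tendsto (fun t : ℝ => t - t^2/2) (𝓝 1) (𝓝 ((1:ℝ) - 1^2/2)) := by
        apply Filter.Tendsto.sub tendsto_id
        apply Filter.Tendsto.div_const
        exact (tendsto_id.pow 2)
      have h12 : ((1:ℝ) - 1^2/2) = 1/2 := by norm_num
      rw [h12] at this
      exact this.mono_left nhdsWithin_le_nhds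
    refine hq.congr' ?_
    filter_upwards [self_mem_nhdsWithin] with s hs
    exact (gg_eq_on_Ico s hs).symm
  exact tendsto_nhds_unique h1 h2

/-- `μ(k) = 2·k^(k-2)/(e^k·k!)` is a probability measure on `{1,2,…}`:
`Σ_{k≥1} 2 k^(k-2) e^(-k)/k! = 1`. -/
theorem stmt5 :
    ∑' k : ℕ+, 2 * ((k : ℕ) : ℝ) ^ ((k : ℕ) - 2) /
        (Real.exp 1 ^ (k : ℕ) * (Nat.factorial (k : ℕ) : ℝ)) = 1 := by
  have half : ∑' k : ℕ, cc k * Real.exp (-1)^k = 1/2 := by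
    have h := gg_one
    unfold gg hh at h
    rw [one_mul, ff_eq] at h
    exact h
  have hshift : ∑' n : ℕ, cc (n+1) * Real.exp (-1)^(n+1) = 1/2 := by
    rw [summable_uu.tsum_eq_zero_add, cc_zero, zero_mul, zero_add] at half
    exact half
  have hterm : ∀ n : ℕ,
      (fun k : ℕ+ => 2 * ((k : ℕ) : ℝ) ^ ((k : ℕ) - 2) /
        (Real.exp 1 ^ (k : ℕ) * (Nat.factorial (k : ℕ) : ℝ)))
          (Equiv.pnatEquivNat.symm n)
      = 2 * (cc (n+1) * Real.exp (-1)^(n+1)) := by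
    intro n
    have hcoe : ((Equiv.pnatEquivNat.symm n : ℕ+) : ℕ) = n + 1 := by
      simp [Equiv.pnatEquivNat, Nat.succPNat]
    simp only [hcoe]
    have hcc : cc (n+1) = ((n+1:ℕ):ℝ)^((n+1)-2) / ((n+1).factorial : ℝ) := by
      unfold cc; rw [if_neg (by omega)]
    rw [hcc, Real.exp_neg, inv_pow]
    have hf : ((n+1).factorial : ℝ) ≠ 0 := by positivity
    have he : Real.exp 1 ^ (n+1) ≠ 0 := by positivity
    push_cast
    field_simp
  calc ∑' k : ℕ+, 2 * ((k : ℕ) : ℝ) ^ ((k : ℕ) - 2) /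
        (Real.exp 1 ^ (k : ℕ) * (Nat.factorial (k : ℕ) : ℝ))
      = ∑' n : ℕ, (fun k : ℕ+ => 2 * ((k : ℕ) : ℝ) ^ ((k : ℕ) - 2) /
        (Real.exp 1 ^ (k : ℕ) * (Nat.factorial (k : ℕ) : ℝ)))
          (Equiv.pnatEquivNat.symm n) := (Equiv.pnatEquivNat.symm.tsum_eq _).symm
    _ = ∑' n : ℕ, 2 * (cc (n+1) * Real.exp (-1)^(n+1)) := tsum_congr hterm
    _ = 2 * (1/2) := by rw [tsum_mul_left, hshift]
    _ = 1 := by norm_num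
end

section
/- For 0 ≤ m ≤ n-1, PF_root(n,m) = (1 - m/n) · PF(n,m), where PF(n,m) counts parking configurations where all m cars park (root possibly occupied) and PF_root(n,m) additionally requires the root to remain empty. -/
/-- One driving step following parent pointers. -/
def pstep {n : ℕ} (p : Fin n → Option (Fin n)) (o : Option (Fin n)) : Option (Fin n) :=
  o.bind p

/-- `p` is (the parent function of) a forest of rooted trees on `{1,…,n}`:
every ancestor chain terminates (no cycles). -/
def IsRootedForest {n : ℕ} (p : Fin n → Option (Fin n)) : Prop :=
  ∀ v : Fin n, (pstep p)^[n] (some v) = none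

/-- `p` is (the parent function of) a rooted Cayley tree on `{1,…,n}`. -/
def IsRootedTree {n : ℕ} (p : Fin n → Option (Fin n)) : Prop :=
  IsRootedForest p ∧ ∃! r : Fin n, p r = none

/-- A car arriving at `v` with current occupation `occ` drives towards the root and
parks at the first empty vertex on its way (`none` if it exits through the root).
`fuel` bounds the number of steps; `fuel = n` suffices on a tree with `n` vertices. -/
def drive {n : ℕ} (p : Fin n → Option (Fin n)) (occ : Finset (Fin n)) :
    ℕ → Fin n → Option (Fin n)
  | 0, _ => none
  | fuel + 1, v => if v ∈ occ then (p v).bind (drive p occ fuel) else some v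

/-- Sequentially park the cars of the list `xs`; returns the final occupied set if
every car managed to park, and `none` otherwise. -/
def parkAll {n : ℕ} (p : Fin n → Option (Fin n)) :
    Finset (Fin n) → List (Fin n) → Option (Finset (Fin n))
  | occ, [] => some occ
  | occ, v :: rest =>
      match drive p occ n v with
      | none => none
      | some s => parkAll p (insert s occ) rest

namespace Aux11
variable {n : ℕ}

lemma pstep_some (p : Fin n → Option (Fin n)) (v : Fin n) : pstep p (some v) = p v := rfl

lemma pstep_none (p : Fin n → Option (Fin n)) : pstep p none = none := rfl

lemma iter_none (p : Fin n → Option (Fin n)) (k : ℕ) : (pstep p)^[k] none = none := by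
  induction k with
  | zero => rfl
  | succ k ih => rw [Function.iterate_succ_apply, pstep_none]; exact ih

lemma iter_absorb {p : Fin n → Option (Fin n)} {k K : ℕ} {v : Fin n}
    (h : (pstep p)^[k] (some v) = none) (hk : k ≤ K) :
    (pstep p)^[K] (some v) = none := by
  obtain ⟨d, rfl⟩ := Nat.exists_eq_add_of_le hk
  rw [Nat.add_comm, Function.iterate_add_apply, h, iter_none]

lemma no_cycle {p : Fin n → Option (Fin n)} (hf : IsRootedForest p) {a : Fin n} {j : ℕ}
    (hj : 1 ≤ j) (h : (pstep p)^[j] (some a) = some a) : False := by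
  have hmul : ∀ t, (pstep p)^[j * t] (some a) = some a := by
    intro t
    induction t with
    | zero => simp
    | succ t ih => rw [Nat.mul_succ, Function.iterate_add_apply, h, ih]
  have h1 : (pstep p)^[j * n] (some a) = none :=
    iter_absorb (hf a) (Nat.le_mul_of_pos_left n hj)
  rw [hmul n] at h1
  exact Option.some_ne_none a h1

lemma forest_of_exists {p : Fin n → Option (Fin n)}
    (h : ∀ v : Fin n, ∃ k, (pstep p)^[k] (some v) = none) : IsRootedForest p := by
  intro v
  have hv := h v
  set k := Nat.find hv with hkdef
  have hknone : (pstep p)^[k] (some v) = none := Nat.find_spec hv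
  have hlt : ∀ j < k, ((pstep p)^[j] (some v)).isSome := by
    intro j hj
    have := Nat.find_min hv hj
    exact Option.ne_none_iff_isSome.mp this
  have hkn : k ≤ n := by
    by_contra hgt
    push_neg at hgt
    have key : ∀ i j : ℕ, i < j → j < k →
        (pstep p)^[i] (some v) ≠ (pstep p)^[j] (some v) := by
      intro i j hij hjk heq
      have h1 : (pstep p)^[(k - j) + j] (some v) = none := by
        rw [Nat.sub_add_cancel hjk.le]; exact hknone
      rw [Function.iterate_add_apply, ← heq, ← Function.iterate_add_apply] at h1
      have h2 := hlt ((k - j) + i) (by omega)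
      rw [h1] at h2
      simp at h2
    let f : Fin k → Fin n := fun i => ((pstep p)^[(i : ℕ)] (some v)).get (hlt i i.2)
    have hfinj : Function.Injective f := by
      intro i j hij
      by_contra hne
      have h1 : (pstep p)^[(i : ℕ)] (some v) = (pstep p)^[(j : ℕ)] (some v) := by
        have := congrArg (fun x => some x) hij
        simpa [f, Option.some_get] using this
      rcases Nat.lt_or_ge (i : ℕ) (j : ℕ) with hlt' | hge
      · exact key i j hlt' j.2 h1
      · have : (j : ℕ) < (i : ℕ) := by
          rcases Nat.lt_or_ge (j : ℕ) (i : ℕ) with h' | h'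
          · exact h'
          · exact absurd (Fin.ext (le_antisymm h' hge)) hne
        exact key j i this i.2 h1.symm
    have := Fintype.card_le_of_injective f hfinj
    simp at this
    omega
  exact iter_absorb hknone hkn

lemma reach_root {p : Fin n → Option (Fin n)} (hf : IsRootedForest p) {r : Fin n}
    (hru : ∀ y, p y = none → y = r) (v : Fin n) :
    ∃ j, (pstep p)^[j] (some v) = some r := by
  have hex : ∃ k, (pstep p)^[k] (some v) = none := ⟨n, hf v⟩
  set k := Nat.find hex with hkdef
  have hknone : (pstep p)^[k] (some v) = none := Nat.find_spec hex
  have hk1 : 1 ≤ k := by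
    rcases Nat.eq_zero_or_pos k with h0 | h1
    · rw [h0] at hknone; simp at hknone
    · exact h1
  have hprev : ((pstep p)^[k - 1] (some v)).isSome := by
    have := Nat.find_min hex (show k - 1 < k by omega)
    exact Option.ne_none_iff_isSome.mp this
  obtain ⟨w, hw⟩ := Option.isSome_iff_exists.mp hprev
  have hk : k = (k - 1) + 1 := by omega
  rw [hk, Function.iterate_succ_apply', hw, pstep_some] at hknone
  exact ⟨k - 1, by rw [hw, hru w hknone]⟩


noncomputable def rootOf (hn : 0 < n) (p : Fin n → Option (Fin n)) : Fin n :=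
  if h : ∃ r, p r = none then h.choose else ⟨0, hn⟩

lemma rootOf_none {p : Fin n → Option (Fin n)} (hn : 0 < n) (hp : IsRootedTree p) :
    p (rootOf hn p) = none := by
  obtain ⟨r, hr, _⟩ := hp.2
  rw [rootOf, dif_pos ⟨r, hr⟩]
  exact (⟨r, hr⟩ : ∃ r, p r = none).choose_spec

lemma rootOf_eq {p : Fin n → Option (Fin n)} (hn : 0 < n) (hp : IsRootedTree p)
    {y : Fin n} (hy : p y = none) : y = rootOf hn p := by
  obtain ⟨r, hr, hu⟩ := hp.2
  rw [hu y hy, hu _ (rootOf_none hn hp)]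

/-- the rerooting operation: point the old root to `a`, and cut at `b`
(where `b` lies on the chain from `a`). -/
lemma omega_tree {p : Fin n → Option (Fin n)} (hp : IsRootedTree p) {r : Fin n}
    (hr : p r = none) (hru : ∀ y, p y = none → y = r)
    {a b : Fin n} (hab : ∃ j, (pstep p)^[j] (some a) = some b) :
    IsRootedTree (Function.update (Function.update p r (some a)) b none) ∧
      ∀ y, (Function.update (Function.update p r (some a)) b none) y = none ↔ y = b := by
  classical
  set q := Function.update (Function.update p r (some a)) b none with hq
  by_cases hbr : b = r
  · have hqp : q = p := by
      subst hbr
      rw [hq, Function.update_idem, ← hr, Function.update_eq_self]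
    rw [hqp]
    subst hbr
    refine ⟨hp, fun y => ⟨fun h => hru y h, fun h => h ▸ hr⟩⟩
  · have hqb : q b = none := by rw [hq]; simp
    have hqr : q r = some a := by
      rw [hq, Function.update_of_ne (fun h => hbr h.symm)]
      simp
    have hqx : ∀ x, x ≠ b → x ≠ r → q x = p x := by
      intro x hxb hxr
      rw [hq, Function.update_of_ne hxb, Function.update_of_ne hxr]
    -- Claim A : anything that reaches b in p dies in q
    have claimA : ∀ j, ∀ x : Fin n, (pstep p)^[j] (some x) = some b →
        ∃ k, (pstep q)^[k] (some x) = none := by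
      intro j
      induction j with
      | zero =>
        intro x hx
        simp only [Function.iterate_zero, id, Option.some_inj] at hx
        exact ⟨1, by rw [hx]; simpa [pstep_some] using hqb⟩
      | succ j ih =>
        intro x hx
        by_cases hxb : x = b
        · exact ⟨1, by rw [hxb]; simpa [pstep_some] using hqb⟩
        · have hxr : x ≠ r := by
            rintro rfl
            rw [Function.iterate_succ_apply, pstep_some, hr, iter_none] at hx
            exact (Option.some_ne_none b hx.symm).elim
          cases hpx : p x with
          | none => exact absurd (hru x hpx) hxr
          | some y =>
            rw [Function.iterate_succ_apply, pstep_some, hpx] at hx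
            obtain ⟨k, hk⟩ := ih y hx
            exact ⟨k + 1, by
              rw [Function.iterate_succ_apply, pstep_some, hqx x hxb hxr, hpx]; exact hk⟩
    have hGa : ∃ k, (pstep q)^[k] (some a) = none := by
      obtain ⟨j, hj⟩ := hab
      exact claimA j a hj
    -- Claim B : everything dies in q
    have claimB : ∀ j, ∀ x : Fin n, (pstep p)^[j] (some x) = some r →
        ∃ k, (pstep q)^[k] (some x) = none := by
      intro j
      induction j with
      | zero =>
        intro x hx
        simp only [Function.iterate_zero, id, Option.some_inj] at hx
        obtain ⟨k, hk⟩ := hGa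
        exact ⟨k + 1, by rw [hx, Function.iterate_succ_apply, pstep_some, hqr]; exact hk⟩
      | succ j ih =>
        intro x hx
        by_cases hxb : x = b
        · exact ⟨1, by rw [hxb]; simpa [pstep_some] using hqb⟩
        · by_cases hxr : x = r
          · obtain ⟨k, hk⟩ := hGa
            exact ⟨k + 1, by rw [hxr, Function.iterate_succ_apply, pstep_some, hqr]; exact hk⟩
          · cases hpx : p x with
            | none => exact absurd (hru x hpx) hxr
            | some y =>
              rw [Function.iterate_succ_apply, pstep_some, hpx] at hx
              obtain ⟨k, hk⟩ := ih y hx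
              exact ⟨k + 1, by
                rw [Function.iterate_succ_apply, pstep_some, hqx x hxb hxr, hpx]; exact hk⟩
    have hforest : IsRootedForest q := by
      apply forest_of_exists
      intro v
      obtain ⟨j, hj⟩ := reach_root hp.1 hru v
      exact claimB j v hj
    have hroots : ∀ y, q y = none ↔ y = b := by
      intro y
      constructor
      · intro hy
        by_cases hyb : y = b
        · exact hyb
        · by_cases hyr : y = r
          · rw [hyr, hqr] at hy; simp at hy
          · rw [hqx y hyb hyr] at hy
            exact absurd (hru y hy) hyr
      · rintro rfl; exact hqb
    exact ⟨⟨hforest, ⟨b, hqb, fun y hy => (hroots y).mp hy⟩⟩, hroots⟩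


open Classical in
noncomputable def zOf (hn : 0 < n) (p : Fin n → Option (Fin n)) (u : Fin n) : Fin n :=
  if h : ∃ j, (pstep p)^[j] (some u) = some (rootOf hn p) then
    ((pstep p)^[Nat.find h - 1] (some u)).getD (rootOf hn p)
  else ⟨0, hn⟩

lemma root_unique {p : Fin n → Option (Fin n)} (hn : 0 < n) (hp : IsRootedTree p) :
    ∀ y, p y = none → y = rootOf hn p := fun _ hy => rootOf_eq hn hp hy

lemma zOf_spec {p : Fin n → Option (Fin n)} (hn : 0 < n) (hp : IsRootedTree p) (u : Fin n) :
    (∃ j, (pstep p)^[j] (some u) = some (zOf hn p u)) ∧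
    ((u = rootOf hn p ∧ zOf hn p u = u) ∨
     (p (zOf hn p u) = some (rootOf hn p) ∧ zOf hn p u ≠ rootOf hn p ∧
       u ≠ rootOf hn p)) := by
  have h : ∃ j, (pstep p)^[j] (some u) = some (rootOf hn p) :=
    reach_root hp.1 (root_unique hn hp) u
  have hz : zOf hn p u = ((pstep p)^[Nat.find h - 1] (some u)).getD (rootOf hn p) := by
    rw [zOf]; rw [dif_pos h]
  by_cases hk : Nat.find h = 0
  · have h0 : some u = some (rootOf hn p) := by
      have := Nat.find_spec h
      rwa [hk] at this
    have hu : u = rootOf hn p := Option.some_inj.mp h0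
    have hzu : zOf hn p u = u := by rw [hz, hk]; simp
    exact ⟨⟨0, by simp [hzu]⟩, Or.inl ⟨hu, hzu⟩⟩
  · have hk1 : 1 ≤ Nat.find h := Nat.one_le_iff_ne_zero.mpr hk
    have hur : u ≠ rootOf hn p := fun he => hk (Nat.le_zero.mp (Nat.find_le (by simp [he])))
    have hprev : ((pstep p)^[Nat.find h - 1] (some u)).isSome := by
      by_contra hns
      have hnone : (pstep p)^[Nat.find h - 1] (some u) = none := by
        cases he : (pstep p)^[Nat.find h - 1] (some u) with
        | none => rfl
        | some w => rw [he] at hns; simp at hns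
      have := Nat.find_spec h
      have hkk : Nat.find h = (Nat.find h - 1) + 1 := by omega
      rw [hkk, Function.iterate_succ_apply', hnone, pstep_none] at this
      simp at this
    obtain ⟨w, hw⟩ := Option.isSome_iff_exists.mp hprev
    have hzw : zOf hn p u = w := by rw [hz, hw]; rfl
    have hpw : p w = some (rootOf hn p) := by
      have := Nat.find_spec h
      have hkk : Nat.find h = (Nat.find h - 1) + 1 := by omega
      rwa [hkk, Function.iterate_succ_apply', hw, pstep_some] at this
    refine ⟨⟨Nat.find h - 1, by rw [hzw, hw]⟩, Or.inr ⟨by rw [hzw]; exact hpw, ?_, hur⟩⟩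
    rw [hzw]
    intro hwr
    rw [hwr, rootOf_none hn hp] at hpw
    simp at hpw

noncomputable def phiFun (hn : 0 < n) (p : Fin n → Option (Fin n)) (u : Fin n) :
    Fin n → Option (Fin n) :=
  Function.update (Function.update p (rootOf hn p) (some u)) (zOf hn p u) none

noncomputable def psiFun (hn : 0 < n) (p : Fin n → Option (Fin n)) (v : Fin n) :
    Fin n → Option (Fin n) :=
  Function.update (Function.update p (rootOf hn p) (some v)) v none

noncomputable def uOf (p : Fin n → Option (Fin n)) (v : Fin n) : Fin n := (p v).getD v

lemma phi_tree {p : Fin n → Option (Fin n)} (hn : 0 < n) (hp : IsRootedTree p) (u : Fin n) :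
    IsRootedTree (phiFun hn p u) ∧ ∀ y, (phiFun hn p u) y = none ↔ y = zOf hn p u :=
  omega_tree hp (rootOf_none hn hp) (root_unique hn hp) (zOf_spec hn hp u).1

lemma psi_tree {p : Fin n → Option (Fin n)} (hn : 0 < n) (hp : IsRootedTree p) (v : Fin n) :
    IsRootedTree (psiFun hn p v) ∧ ∀ y, (psiFun hn p v) y = none ↔ y = v :=
  omega_tree hp (rootOf_none hn hp) (root_unique hn hp) ⟨0, rfl⟩

lemma rootOf_phi {p : Fin n → Option (Fin n)} (hn : 0 < n) (hp : IsRootedTree p) (u : Fin n) :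
    rootOf hn (phiFun hn p u) = zOf hn p u :=
  (rootOf_eq hn (phi_tree hn hp u).1 (((phi_tree hn hp u).2 _).mpr rfl)).symm

lemma rootOf_psi {p : Fin n → Option (Fin n)} (hn : 0 < n) (hp : IsRootedTree p) (v : Fin n) :
    rootOf hn (psiFun hn p v) = v :=
  (rootOf_eq hn (psi_tree hn hp v).1 (((psi_tree hn hp v).2 _).mpr rfl)).symm

lemma phi_cond {p : Fin n → Option (Fin n)} (hn : 0 < n) (hp : IsRootedTree p) (u : Fin n) :
    ∀ x, x ≠ rootOf hn p →
      phiFun hn p u x = p x ∨ p x = some (rootOf hn p) ∨ p x = none := by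
  intro x hxr
  by_cases hxz : x = zOf hn p u
  · rcases (zOf_spec hn hp u).2 with ⟨hu, hzu⟩ | ⟨hpz, hzr, -⟩
    · exact absurd (hxz.trans (hzu.trans hu)) hxr
    · right; left; rw [hxz]; exact hpz
  · left
    rw [phiFun, Function.update_of_ne hxz, Function.update_of_ne hxr]

lemma psi_cond {p : Fin n → Option (Fin n)} (hn : 0 < n) (hp : IsRootedTree p) (v : Fin n) :
    ∀ x, x ≠ v → psiFun hn p v x = p x ∨ p x = some v ∨ p x = none := by
  intro x hxv
  by_cases hxz : x = rootOf hn p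
  · right; right; rw [hxz]; exact rootOf_none hn hp
  · left
    rw [psiFun, Function.update_of_ne hxv, Function.update_of_ne hxz]

lemma psi_phi {p : Fin n → Option (Fin n)} (hn : 0 < n) (hp : IsRootedTree p) (u : Fin n) :
    psiFun hn (phiFun hn p u) (rootOf hn p) = p ∧
      uOf (phiFun hn p u) (rootOf hn p) = u := by
  set r := rootOf hn p with hrdef
  set z := zOf hn p u with hzdef
  have hpr : p r = none := rootOf_none hn hp
  have hrphi : rootOf hn (phiFun hn p u) = z := rootOf_phi hn hp u
  rcases (zOf_spec hn hp u).2 with ⟨hu, hzu⟩ | ⟨hpz, hzr, -⟩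
  · -- u = r, z = u
    have hzr : z = r := hzu.trans hu
    have hphi : phiFun hn p u = p := by
      rw [phiFun, ← hrdef, ← hzdef, hzr, Function.update_idem, ← hpr,
        Function.update_eq_self]
    rw [hphi]
    constructor
    · rw [psiFun, ← hrdef, ← hpr, Function.update_idem, Function.update_eq_self]
    · rw [uOf, hpr, hu]; rfl
  · -- p z = some r, z ≠ r
    have hq1 : Function.update (phiFun hn p u) z (some r) =
        Function.update p r (some u) := by
      rw [phiFun, ← hrdef, ← hzdef, Function.update_idem, ← hpz]
      have : (Function.update p r (some u)) z = p z :=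
        Function.update_of_ne hzr _ _
      rw [← this, Function.update_eq_self]
    constructor
    · rw [psiFun, hrphi, hq1, Function.update_idem, ← hpr, Function.update_eq_self]
    · rw [uOf, phiFun, ← hrdef, ← hzdef,
        Function.update_of_ne (fun h => hzr h.symm) , Function.update_self]
      rfl


lemma phi_psi {p'' : Fin n → Option (Fin n)} (hn : 0 < n) (hp : IsRootedTree p'') (v : Fin n) :
    phiFun hn (psiFun hn p'' v) (uOf p'' v) = p'' := by
  classical
  set z := rootOf hn p'' with hzdef
  set p := psiFun hn p'' v with hpdef
  set u := uOf p'' v with hudef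
  have hp''z : p'' z = none := rootOf_none hn hp
  have hrp : rootOf hn p = v := rootOf_psi hn hp v
  have hptree : IsRootedTree p := (psi_tree hn hp v).1
  by_cases hvz : v = z
  · -- v is the root of p''
    have hpeq : p = p'' := by
      rw [hpdef, psiFun, ← hzdef, hvz, Function.update_idem, ← hp''z,
        Function.update_eq_self]
    have huv : u = v := by rw [hudef, uOf, hvz, hp''z]; rfl
    have hzOf : zOf hn p u = v := by
      rcases (zOf_spec hn hptree u).2 with ⟨h1, h2⟩ | ⟨h1, h2, h3⟩
      · rw [h2, huv]
      · exact absurd (huv.trans hrp.symm) h3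
    rw [phiFun, hrp, hzOf, hpeq, huv, hvz, Function.update_idem, ← hp''z,
      Function.update_eq_self]
  · -- v is not the root of p''
    have hup : p'' v = some u := by
      cases hw : p'' v with
      | none => exact absurd (rootOf_eq hn hp hw) hvz
      | some w => rw [hudef, uOf, hw]; rfl
    have hpv : p v = none := by
      rw [hpdef, psiFun, Function.update_self]
    have hpz : p z = some v := by
      rw [hpdef, psiFun, ← hzdef, Function.update_of_ne (fun h => hvz h.symm),
        Function.update_self]
    have hpx : ∀ x, x ≠ v → x ≠ z → p x = p'' x := by
      intro x hxv hxz
      rw [hpdef, psiFun, ← hzdef, Function.update_of_ne hxv, Function.update_of_ne hxz]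
    have hnv : ∀ t, (pstep p'')^[t] (some u) ≠ some v := by
      intro t ht
      refine no_cycle hp.1 (j := t + 1) (by omega) (a := v) ?_
      rw [Function.iterate_succ_apply, pstep_some, hup, ht]
    have h2 : ∃ j, (pstep p'')^[j] (some u) = some z :=
      reach_root hp.1 (root_unique hn hp) u
    set j0 := Nat.find h2 with hj0def
    have hj0 : (pstep p'')^[j0] (some u) = some z := Nat.find_spec h2
    have hagree : ∀ j, j ≤ j0 → (pstep p)^[j] (some u) = (pstep p'')^[j] (some u) := by
      intro j
      induction j with
      | zero => intro _; rfl
      | succ j ih =>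
        intro hj
        have hjlt : j < j0 := by omega
        have hws : ((pstep p'')^[j] (some u)).isSome := by
          by_contra hns
          have hnone : (pstep p'')^[j] (some u) = none := by
            cases he : (pstep p'')^[j] (some u) with
            | none => rfl
            | some w => rw [he] at hns; simp at hns
          have : (pstep p'')^[(j0 - j) + j] (some u) = none := by
            rw [Function.iterate_add_apply, hnone, iter_none]
          rw [Nat.sub_add_cancel hjlt.le, hj0] at this
          simp at this
        obtain ⟨w, hw2⟩ := Option.isSome_iff_exists.mp hws
        have hwz : w ≠ z := by
          intro he
          exact Nat.find_min h2 hjlt (by rw [hw2, he])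
        have hwv : w ≠ v := by
          intro he
          exact hnv j (by rw [hw2, he])
        rw [Function.iterate_succ_apply', Function.iterate_succ_apply',
          ih hjlt.le, hw2, pstep_some, pstep_some, hpx w hwv hwz]
    have hfull : (pstep p)^[j0 + 1] (some u) = some v := by
      rw [Function.iterate_succ_apply', hagree j0 le_rfl, hj0, pstep_some, hpz]
    have h : ∃ j, (pstep p)^[j] (some u) = some (rootOf hn p) :=
      ⟨j0 + 1, by rw [hrp]; exact hfull⟩
    have hzval : zOf hn p u = ((pstep p)^[Nat.find h - 1] (some u)).getD (rootOf hn p) := by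
      rw [zOf]; rw [dif_pos h]
    have hkle : Nat.find h ≤ j0 + 1 := Nat.find_le (by rw [hrp]; exact hfull)
    have hkeq : Nat.find h = j0 + 1 := by
      rcases Nat.lt_or_ge (Nat.find h) (j0 + 1) with hlt | hge
      · exfalso
        have hspec' : (pstep p)^[Nat.find h] (some u) = some v := by
          rw [← hrp]; exact Nat.find_spec h
        rw [hagree (Nat.find h) (by omega)] at hspec'
        exact hnv (Nat.find h) hspec'
      · omega
    have hzOf : zOf hn p u = z := by
      rw [hzval, hkeq, Nat.add_sub_cancel, hagree j0 le_rfl, hj0]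
      rfl
    funext x
    rw [phiFun, hrp, hzOf]
    by_cases hxz : x = z
    · rw [hxz, Function.update_self, hp''z]
    · rw [Function.update_of_ne hxz]
      by_cases hxv : x = v
      · rw [hxv, Function.update_self, hup]
      · rw [Function.update_of_ne hxv]
        exact hpx x hxv hxz


lemma drive_transfer {p p' : Fin n → Option (Fin n)} {r : Fin n}
    (hc : ∀ x, x ≠ r → p' x = p x ∨ p x = some r ∨ p x = none) :
    ∀ fuel (occ : Finset (Fin n)) (x s : Fin n), r ∉ occ → drive p occ fuel x = some s →
      s ≠ r → drive p' occ fuel x = some s := by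
  intro fuel
  induction fuel with
  | zero => intro occ x s _ h _; simp [drive] at h
  | succ f ih =>
    intro occ x s hro h hs
    by_cases hx : x ∈ occ
    · have hxr : x ≠ r := fun e => hro (e ▸ hx)
      rw [drive, if_pos hx] at h
      rw [drive, if_pos hx]
      rcases hc x hxr with hcx | hcx | hcx
      · rw [hcx]
        cases hpx : p x with
        | none => rw [hpx] at h; simp at h
        | some y =>
          rw [hpx] at h
          simp only [Option.bind_some] at h ⊢
          exact ih occ y s hro h hs
      · exfalso
        rw [hcx] at h
        simp only [Option.bind_some] at h
        cases f with
        | zero => simp [drive] at h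
        | succ g =>
          rw [drive, if_neg hro] at h
          exact hs (Option.some_inj.mp h).symm
      · rw [hcx] at h; simp at h
    · rw [drive, if_neg hx] at h
      rw [drive, if_neg hx]
      exact h

lemma parkAll_mono {p : Fin n → Option (Fin n)} :
    ∀ (xs : List (Fin n)) (occ O : Finset (Fin n)),
      parkAll p occ xs = some O → occ ⊆ O := by
  intro xs
  induction xs with
  | nil => intro occ O h; rw [parkAll] at h; exact (Option.some_inj.mp h) ▸ le_refl _
  | cons v rest ih =>
    intro occ O h
    rw [parkAll] at h
    cases hd : drive p occ n v with
    | none => rw [hd] at h; simp at h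
    | some s =>
      rw [hd] at h
      exact fun a ha => ih _ _ h (Finset.mem_insert_of_mem ha)

lemma drive_not_mem {p : Fin n → Option (Fin n)} :
    ∀ fuel (occ : Finset (Fin n)) (v s : Fin n), drive p occ fuel v = some s → s ∉ occ := by
  intro fuel
  induction fuel with
  | zero => intro occ v s h; simp [drive] at h
  | succ f ih =>
    intro occ v s h
    by_cases hv : v ∈ occ
    · rw [drive, if_pos hv] at h
      cases hpv : p v with
      | none => rw [hpv] at h; simp at h
      | some y =>
        rw [hpv] at h
        simp only [Option.bind_some] at h
        exact ih occ y s h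
    · rw [drive, if_neg hv] at h
      exact (Option.some_inj.mp h) ▸ hv

lemma parkAll_card {p : Fin n → Option (Fin n)} :
    ∀ (xs : List (Fin n)) (occ O : Finset (Fin n)),
      parkAll p occ xs = some O → O.card = occ.card + xs.length := by
  intro xs
  induction xs with
  | nil => intro occ O h; rw [parkAll] at h; rw [← Option.some_inj.mp h]; simp
  | cons v rest ih =>
    intro occ O h
    rw [parkAll] at h
    cases hd : drive p occ n v with
    | none => rw [hd] at h; simp at h
    | some s =>
      rw [hd] at h
      have := ih _ _ h
      rw [this, Finset.card_insert_of_notMem (drive_not_mem n occ v s hd)]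
      simp [Nat.add_comm, Nat.add_assoc, Nat.add_left_comm]

lemma parkAll_transfer {p p' : Fin n → Option (Fin n)} {r : Fin n}
    (hc : ∀ x, x ≠ r → p' x = p x ∨ p x = some r ∨ p x = none) :
    ∀ (xs : List (Fin n)) (occ O : Finset (Fin n)), r ∉ occ → r ∉ O →
      parkAll p occ xs = some O → parkAll p' occ xs = some O := by
  intro xs
  induction xs with
  | nil => intro occ O _ _ h; rw [parkAll] at h ⊢; exact h
  | cons v rest ih =>
    intro occ O hro hrO h
    rw [parkAll] at h
    cases hd : drive p occ n v with
    | none => rw [hd] at h; simp at h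
    | some s =>
      rw [hd] at h
      have hsub := parkAll_mono rest (insert s occ) O h
      have hs : s ∈ O := hsub (Finset.mem_insert_self s occ)
      have hsr : s ≠ r := fun e => hrO (e ▸ hs)
      have hd' := drive_transfer hc n occ v s hro hd hsr
      rw [parkAll, hd']
      exact ih _ _ (by simp [hro, Ne.symm hsr]) hrO h


variable {m : ℕ}

def Occ (q : (Fin n → Option (Fin n)) × (Fin m → Fin n)) : Finset (Fin n) :=
  (parkAll q.1 ∅ (List.ofFn q.2)).getD ∅

def PFc (q : (Fin n → Option (Fin n)) × (Fin m → Fin n)) : Prop :=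
  IsRootedTree q.1 ∧ (parkAll q.1 ∅ (List.ofFn q.2)).isSome

def PFRc (q : (Fin n → Option (Fin n)) × (Fin m → Fin n)) : Prop :=
  IsRootedTree q.1 ∧ ∃ occ : Finset (Fin n),
    parkAll q.1 ∅ (List.ofFn q.2) = some occ ∧ ∀ r, q.1 r = none → r ∉ occ

lemma phi_mem (hn : 0 < n) {q : (Fin n → Option (Fin n)) × (Fin m → Fin n)}
    (hq : PFRc q) (u : Fin n) :
    PFc ((phiFun hn q.1 u, q.2) : (Fin n → Option (Fin n)) × (Fin m → Fin n)) ∧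
      rootOf hn q.1 ∉ Occ ((phiFun hn q.1 u, q.2) :
        (Fin n → Option (Fin n)) × (Fin m → Fin n)) := by
  obtain ⟨hp, O, hpark, hroots⟩ := hq
  have hrO : rootOf hn q.1 ∉ O := hroots _ (rootOf_none hn hp)
  have htrans : parkAll (phiFun hn q.1 u) ∅ (List.ofFn q.2) = some O :=
    parkAll_transfer (phi_cond hn hp u) _ ∅ O (Finset.notMem_empty _) hrO hpark
  refine ⟨⟨(phi_tree hn hp u).1, by rw [htrans]; rfl⟩, ?_⟩
  show rootOf hn q.1 ∉ (parkAll (phiFun hn q.1 u) ∅ (List.ofFn q.2)).getD ∅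
  rw [htrans]
  exact hrO

lemma psi_mem (hn : 0 < n) {q : (Fin n → Option (Fin n)) × (Fin m → Fin n)}
    (hq : PFc q) {v : Fin n} (hv : v ∉ Occ q) :
    PFRc ((psiFun hn q.1 v, q.2) : (Fin n → Option (Fin n)) × (Fin m → Fin n)) := by
  obtain ⟨hp, hsome⟩ := hq
  obtain ⟨O, hO⟩ := Option.isSome_iff_exists.mp hsome
  have hv' : v ∉ O := by
    rw [Occ, hO] at hv
    exact hv
  have htrans : parkAll (psiFun hn q.1 v) ∅ (List.ofFn q.2) = some O :=
    parkAll_transfer (psi_cond hn hp v) _ ∅ O (Finset.notMem_empty _) hv' hO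
  refine ⟨(psi_tree hn hp v).1, O, htrans, fun r hr => ?_⟩
  rw [((psi_tree hn hp v).2 r).mp hr]
  exact hv'

lemma card_eq (hn : 0 < n) :
    Nat.card {x : ((Fin n → Option (Fin n)) × (Fin m → Fin n)) × Fin n // PFRc x.1} =
    Nat.card {x : ((Fin n → Option (Fin n)) × (Fin m → Fin n)) × Fin n //
      PFc x.1 ∧ x.2 ∉ Occ x.1} := by
  apply Nat.card_congr
  refine ⟨fun x => ⟨((phiFun hn x.1.1.1 x.1.2, x.1.1.2), rootOf hn x.1.1.1),
      (phi_mem hn x.2 x.1.2).1, (phi_mem hn x.2 x.1.2).2⟩,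
    fun y => ⟨((psiFun hn y.1.1.1 y.1.2, y.1.1.2), uOf y.1.1.1 y.1.2),
      psi_mem hn y.2.1 y.2.2⟩, ?_, ?_⟩
  · rintro ⟨⟨⟨p, σ⟩, u⟩, hx⟩
    have h1 := psi_phi hn hx.1 u
    apply Subtype.ext
    simp only [Prod.mk.injEq]
    exact ⟨⟨h1.1, trivial⟩, h1.2⟩
  · rintro ⟨⟨⟨p, σ⟩, v⟩, hy⟩
    apply Subtype.ext
    simp only [Prod.mk.injEq]
    exact ⟨⟨phi_psi hn hy.1.1 v, trivial⟩, rootOf_psi hn hy.1.1 v⟩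

lemma card_X (hn : 0 < n) :
    Nat.card {x : ((Fin n → Option (Fin n)) × (Fin m → Fin n)) × Fin n // PFRc x.1} =
    Nat.card {q : (Fin n → Option (Fin n)) × (Fin m → Fin n) // PFRc q} * n := by
  have e : {x : ((Fin n → Option (Fin n)) × (Fin m → Fin n)) × Fin n // PFRc x.1} ≃
      {q : (Fin n → Option (Fin n)) × (Fin m → Fin n) // PFRc q} × Fin n :=
    ⟨fun x => (⟨x.1.1, x.2⟩, x.1.2), fun y => ⟨(y.1.1, y.2), y.1.2⟩,
      fun x => rfl, fun y => rfl⟩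
  rw [Nat.card_congr e, Nat.card_prod]
  simp

lemma card_Y (hn : 0 < n) (hm : m ≤ n) :
    Nat.card {x : ((Fin n → Option (Fin n)) × (Fin m → Fin n)) × Fin n //
      PFc x.1 ∧ x.2 ∉ Occ x.1} =
    Nat.card {q : (Fin n → Option (Fin n)) × (Fin m → Fin n) // PFc q} * (n - m) := by
  classical
  rw [Nat.card_congr (Equiv.subtypeProdEquivSigmaSubtype
    (fun (q : (Fin n → Option (Fin n)) × (Fin m → Fin n)) (v : Fin n) =>
      PFc q ∧ v ∉ Occ q))]
  rw [Nat.card_eq_fintype_card, Fintype.card_sigma]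
  have hfib : ∀ q : (Fin n → Option (Fin n)) × (Fin m → Fin n),
      Fintype.card {v : Fin n // PFc q ∧ v ∉ Occ q} = if PFc q then n - m else 0 := by
    intro q
    by_cases hq : PFc q
    · rw [if_pos hq]
      have e : {v : Fin n // PFc q ∧ v ∉ Occ q} ≃ {v : Fin n // v ∉ Occ q} :=
        Equiv.subtypeEquivRight (fun v => and_iff_right hq)
      rw [Fintype.card_congr e, Fintype.card_subtype_compl]
      obtain ⟨O, hO⟩ := Option.isSome_iff_exists.mp hq.2
      have hOcc : Occ q = O := by rw [Occ, hO]; rfl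
      have hcard : O.card = m := by
        have := parkAll_card (List.ofFn q.2) ∅ O hO
        simpa using this
      rw [hOcc]
      have : Fintype.card {v : Fin n // v ∈ O} = O.card := Fintype.card_coe O
      rw [this, hcard, Fintype.card_fin]
    · rw [if_neg hq]
      exact Fintype.card_eq_zero_iff.mpr ⟨fun v => hq v.2.1⟩
  rw [Finset.sum_congr rfl (fun q _ => hfib q)]
  rw [Finset.sum_ite, Finset.sum_const, Finset.sum_const_zero, add_zero, smul_eq_mul,
    Nat.card_eq_fintype_card, Fintype.card_subtype]


lemma key (hn : 0 < n) (hm : m ≤ n) :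
    Nat.card {q : (Fin n → Option (Fin n)) × (Fin m → Fin n) // PFRc q} * n =
    Nat.card {q : (Fin n → Option (Fin n)) × (Fin m → Fin n) // PFc q} * (n - m) := by
  rw [← card_X hn, card_eq hn, card_Y hn hm]

end Aux11

/-- `PF n m`: number of pairs (rooted Cayley tree on `{1,…,n}`, sequence of `m` car
arrivals) such that all `m` cars manage to park. -/
noncomputable def PF (n m : ℕ) : ℕ :=
  Nat.card {q : (Fin n → Option (Fin n)) × (Fin m → Fin n) //
    IsRootedTree q.1 ∧ (parkAll q.1 ∅ (List.ofFn q.2)).isSome}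

/-- `PFroot n m`: number of pairs (rooted Cayley tree on `{1,…,n}`, sequence of `m`
car arrivals) such that all `m` cars park and the root vertex stays empty. -/
noncomputable def PFroot (n m : ℕ) : ℕ :=
  Nat.card {q : (Fin n → Option (Fin n)) × (Fin m → Fin n) //
    IsRootedTree q.1 ∧ ∃ occ : Finset (Fin n),
      parkAll q.1 ∅ (List.ofFn q.2) = some occ ∧ ∀ r, q.1 r = none → r ∉ occ}

/-- For `0 ≤ m ≤ n-1`, `PFroot(n,m) = (1 - m/n) · PF(n,m)`. -/
theorem stmt11 (n m : ℕ) (hn : 1 ≤ n) (hm : m ≤ n - 1) :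
    (PFroot n m : ℚ) = (1 - (m : ℚ) / n) * (PF n m : ℚ) := by
  have hn0 : 0 < n := hn
  have hmn : m ≤ n := le_trans hm (Nat.sub_le n 1)
  have key : PFroot n m * n = PF n m * (n - m) := by
    have h := Aux11.key (n := n) (m := m) hn0 hmn
    have h1 : PFroot n m =
        Nat.card {q : (Fin n → Option (Fin n)) × (Fin m → Fin n) // Aux11.PFRc q} := rfl
    have h2 : PF n m =
        Nat.card {q : (Fin n → Option (Fin n)) × (Fin m → Fin n) // Aux11.PFc q} := rfl
    rw [h1, h2]
    exact h
  have keyQ : (PFroot n m : ℚ) * n = (PF n m : ℚ) * ((n : ℚ) - m) := by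
    have h := congrArg (Nat.cast (R := ℚ)) key
    push_cast [Nat.cast_sub hmn] at h
    exact h
  have hnne : (n : ℚ) ≠ 0 := Nat.cast_ne_zero.mpr (by omega)
  field_simp
  linarith [keyQ]
end

section
/- The exponential generating function of nearly parked trees satisfies N(x) = x·exp(F(x)), where N(x) = Σ_{n≥1} PF_root(n,n-1)/(n!(n-1)!) · x^n and F(x) = Σ_{n≥1} PF(n,n)/(n!)^2 · x^n. -/
/-- The EGF of nearly parked trees: `N(x) = Σ_{n≥1} PFroot(n,n-1)/(n!(n-1)!) xⁿ`. -/
noncomputable def Nser : PowerSeries ℚ :=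
  PowerSeries.mk fun k =>
    if k = 0 then 0 else
      (PFroot k (k - 1) : ℚ) / ((Nat.factorial k : ℚ) * (Nat.factorial (k - 1) : ℚ))

/-- The EGF of fully parked trees: `F(x) = Σ_{n≥1} PF(n,n)/(n!)² xⁿ`. -/
noncomputable def Fser : PowerSeries ℚ :=
  PowerSeries.mk fun k =>
    if k = 0 then 0 else (PF k k : ℚ) / (Nat.factorial k : ℚ) ^ 2

/-- `exp(G)` for a power series `G` with zero constant term:
`[xᵏ] exp(G) = Σ_{j=0}^{k} [xᵏ](Gʲ)/j!` (the sum over `j > k` vanishes since `Gʲ`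
has order `≥ j`). -/
noncomputable def expComp (G : PowerSeries ℚ) : PowerSeries ℚ :=
  PowerSeries.mk fun k =>
    ∑ j ∈ Finset.range (k + 1), PowerSeries.coeff k (G ^ j) / (Nat.factorial j : ℚ)

section Basic
variable {n : ℕ} {p : Fin n → Option (Fin n)}

lemma pstep_none : pstep p none = none := rfl
lemma pstep_some {v : Fin n} : pstep p (some v) = p v := rfl

lemma iter_pstep_none (i : ℕ) : (pstep p)^[i] none = none := by
  induction i with
  | zero => rfl
  | succ i ih => rw [Function.iterate_succ_apply, pstep_none, ih]

lemma iter_pstep_none_mono {i j : ℕ} (h : i ≤ j) {o : Option (Fin n)}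
    (h0 : (pstep p)^[i] o = none) : (pstep p)^[j] o = none := by
  obtain ⟨d, rfl⟩ := Nat.exists_eq_add_of_le h
  rw [add_comm, Function.iterate_add_apply, h0, iter_pstep_none]

/-- pigeonhole: a terminating ancestor chain terminates within `n` steps. -/
lemma forest_bound {v : Fin n} {N : ℕ} (hN : (pstep p)^[N] (some v) = none) :
    (pstep p)^[n] (some v) = none := by
  classical
  have hex : ∃ i, (pstep p)^[i] (some v) = none := ⟨N, hN⟩
  have hdnone : (pstep p)^[Nat.find hex] (some v) = none := Nat.find_spec hex
  set d := Nat.find hex with hd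
  have hlt : ∀ i, i < d → ∃ u, (pstep p)^[i] (some v) = some u := by
    intro i hi
    have h2 := Nat.find_min hex hi
    cases h : (pstep p)^[i] (some v) with
    | none => exact absurd h h2
    | some u => exact ⟨u, rfl⟩
  have hdn : d ≤ n := by
    choose g hg using fun i : Fin d => hlt i i.2
    have key : ∀ i j : Fin d, i < j → g i ≠ g j := by
      intro i j hij heq
      have h1 : (pstep p)^[(d - j) + i] (some v) = none := by
        rw [Function.iterate_add_apply, hg i, heq, ← hg j, ← Function.iterate_add_apply]
        have h2 : (d : ℕ) - j + j = d := Nat.sub_add_cancel (le_of_lt j.2)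
        rw [h2]; exact hdnone
      have hj : (j : ℕ) < d := j.2
      have hij' : (i : ℕ) < j := hij
      exact absurd h1 (Nat.find_min hex (by omega))
    have hinj : Function.Injective g := by
      intro i j h
      rcases lt_trichotomy i j with h' | h' | h'
      · exact absurd h (key i j h')
      · exact h'
      · exact absurd h.symm (key j i h')
    simpa using Fintype.card_le_of_injective g hinj
  exact iter_pstep_none_mono hdn hdnone

lemma drive_not_mem {occ : Finset (Fin n)} {f : ℕ} {v : Fin n} (h : v ∉ occ) :
    drive p occ (f + 1) v = some v := by simp [drive, h]

lemma drive_mem {occ : Finset (Fin n)} {f : ℕ} {v : Fin n} (h : v ∈ occ) :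
    drive p occ (f + 1) v = (p v).bind (drive p occ f) := by simp [drive, h]

lemma drive_result_not_mem {occ : Finset (Fin n)} {f : ℕ} {v s : Fin n}
    (h : drive p occ f v = some s) : s ∉ occ := by
  induction f generalizing v with
  | zero => simp [drive] at h
  | succ f ih =>
    by_cases hv : v ∈ occ
    · rw [drive_mem hv] at h
      cases hp : p v with
      | none => rw [hp, Option.bind_none] at h; simp at h
      | some u => rw [hp, Option.bind_some] at h; exact ih h
    · rw [drive_not_mem hv] at h
      cases h; exact hv

lemma drive_fuel_congr {occ : Finset (Fin n)} {v : Fin n} {f g : ℕ}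
    (hf : (pstep p)^[f] (some v) = none) (hfg : f ≤ g) :
    drive p occ g v = drive p occ f v := by
  induction f generalizing v g with
  | zero => simp at hf
  | succ f ih =>
    obtain ⟨g, rfl⟩ : ∃ g', g = g' + 1 := ⟨g - 1, by omega⟩
    by_cases hv : v ∈ occ
    · rw [drive_mem hv, drive_mem hv]
      cases hp : p v with
      | none => rfl
      | some u =>
        simp only [Option.bind_some]
        have hf' : (pstep p)^[f] (some u) = none := by
          rw [Function.iterate_succ_apply, pstep_some, hp] at hf; exact hf
        exact ih hf' (by omega)
    · rw [drive_not_mem hv, drive_not_mem hv]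

/-- `A` is closed under the parent map. -/
def PClosed {n : ℕ} (p : Fin n → Option (Fin n)) (A : Finset (Fin n)) : Prop :=
  ∀ v ∈ A, ∀ u, p v = some u → u ∈ A

lemma drive_closed_mem {A occ : Finset (Fin n)} (hA : PClosed p A) {f : ℕ} {v s : Fin n}
    (hv : v ∈ A) (h : drive p occ f v = some s) : s ∈ A := by
  induction f generalizing v with
  | zero => simp [drive] at h
  | succ f ih =>
    by_cases hocc : v ∈ occ
    · rw [drive_mem hocc] at h
      cases hp : p v with
      | none => rw [hp, Option.bind_none] at h; simp at h
      | some u => rw [hp, Option.bind_some] at h; exact ih (hA v hv u hp) h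
    · rw [drive_not_mem hocc] at h; cases h; exact hv

lemma drive_occ_congr {A occ occ' : Finset (Fin n)} (hA : PClosed p A)
    (hocc : ∀ x ∈ A, (x ∈ occ ↔ x ∈ occ')) {f : ℕ} {v : Fin n} (hv : v ∈ A) :
    drive p occ f v = drive p occ' f v := by
  induction f generalizing v with
  | zero => rfl
  | succ f ih =>
    by_cases h : v ∈ occ
    · rw [drive_mem h, drive_mem ((hocc v hv).1 h)]
      cases hp : p v with
      | none => rfl
      | some u => simp only [Option.bind_some]; exact ih (hA v hv u hp)
    · rw [drive_not_mem h, drive_not_mem (fun h' => h ((hocc v hv).2 h'))]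

lemma parkAll_nil {occ : Finset (Fin n)} : parkAll p occ [] = some occ := rfl

lemma parkAll_cons {occ : Finset (Fin n)} {v : Fin n} {rest : List (Fin n)} :
    parkAll p occ (v :: rest) =
      (drive p occ n v).bind fun s => parkAll p (insert s occ) rest := by
  cases h : drive p occ n v <;> simp [parkAll, h]

lemma parkAll_subset {occ S : Finset (Fin n)} {l : List (Fin n)}
    (h : parkAll p occ l = some S) : occ ⊆ S := by
  induction l generalizing occ with
  | nil => rw [parkAll_nil] at h; cases h; exact Finset.Subset.refl _
  | cons v rest ih =>
    rw [parkAll_cons] at h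
    cases hd : drive p occ n v with
    | none => rw [hd] at h; simp at h
    | some s =>
      rw [hd, Option.bind_some] at h
      exact (Finset.subset_insert s occ).trans (ih h)

lemma parkAll_card {occ S : Finset (Fin n)} {l : List (Fin n)}
    (h : parkAll p occ l = some S) : S.card = occ.card + l.length := by
  induction l generalizing occ with
  | nil => rw [parkAll_nil] at h; cases h; simp
  | cons v rest ih =>
    rw [parkAll_cons] at h
    cases hd : drive p occ n v with
    | none => rw [hd] at h; simp at h
    | some s =>
      rw [hd, Option.bind_some] at h
      rw [ih h, Finset.card_insert_of_notMem (drive_result_not_mem hd)]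
      simp; omega

lemma parkAll_spots {A occ S : Finset (Fin n)} (hA : PClosed p A) {l : List (Fin n)}
    (hl : ∀ x ∈ l, x ∈ A) (h : parkAll p occ l = some S) : ∀ s ∈ S, s ∈ occ ∨ s ∈ A := by
  induction l generalizing occ with
  | nil => rw [parkAll_nil] at h; cases h; exact fun s hs => Or.inl hs
  | cons v rest ih =>
    rw [parkAll_cons] at h
    cases hd : drive p occ n v with
    | none => rw [hd] at h; simp at h
    | some s =>
      rw [hd, Option.bind_some] at h
      intro x hx
      rcases ih (fun y hy => hl y (List.mem_cons_of_mem _ hy)) h x hx with h' | h'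
      · rcases Finset.mem_insert.1 h' with rfl | h''
        · exact Or.inr (drive_closed_mem hA (hl v List.mem_cons_self) hd)
        · exact Or.inl h''
      · exact Or.inr h'

end Basic

section Split
variable {m : ℕ} {q : Fin m → Option (Fin m)}

lemma parkAll_split {A : Finset (Fin m)} (hA : PClosed q A) (hB : PClosed q Aᶜ)
    (l : List (Fin m)) :
    ∀ (O OA OB : Finset (Fin m)),
      (∀ x ∈ A, (x ∈ O ↔ x ∈ OA)) → (∀ x ∈ Aᶜ, (x ∈ O ↔ x ∈ OB)) →
      ((parkAll q O l).isSome ↔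
        (parkAll q OA (l.filter (· ∈ A))).isSome ∧
          (parkAll q OB (l.filter (· ∉ A))).isSome) := by
  induction l with
  | nil => intro O OA OB h1 h2; simp [parkAll_nil]
  | cons v rest ih =>
    intro O OA OB h1 h2
    by_cases hv : v ∈ A
    · rw [List.filter_cons_of_pos (by simpa using hv),
        List.filter_cons_of_neg (by simpa using hv)]
      have hdr : drive q O m v = drive q OA m v := drive_occ_congr hA h1 hv
      rw [parkAll_cons, parkAll_cons, hdr]
      cases hd : drive q OA m v with
      | none => simp
      | some s =>
        have hs : s ∈ A := drive_closed_mem hA hv hd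
        simp only [Option.bind_some]
        exact ih (insert s O) (insert s OA) OB
          (fun x hx => by simp [Finset.mem_insert, h1 x hx])
          (fun x hx => by
            have : x ≠ s := fun h => (Finset.mem_compl.1 hx) (h ▸ hs)
            simp [Finset.mem_insert, this, h2 x hx])
    · have hv' : v ∈ Aᶜ := Finset.mem_compl.2 hv
      rw [List.filter_cons_of_neg (by simpa using hv),
        List.filter_cons_of_pos (by simpa using hv)]
      have hdr : drive q O m v = drive q OB m v := drive_occ_congr hB h2 hv'
      rw [parkAll_cons, parkAll_cons, hdr]
      cases hd : drive q OB m v with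
      | none => simp
      | some s =>
        have hs : s ∈ Aᶜ := drive_closed_mem hB hv' hd
        simp only [Option.bind_some]
        exact ih (insert s O) OA (insert s OB)
          (fun x hx => by
            have : x ≠ s := fun h => (Finset.mem_compl.1 hs) (h ▸ hx)
            simp [Finset.mem_insert, this, h1 x hx])
          (fun x hx => by simp [Finset.mem_insert, h2 x hx])

end Split

section Sim
variable {k m : ℕ} {t : Fin k → Option (Fin k)} {q : Fin m → Option (Fin m)}
  {ι : Fin k → Fin m}

lemma drive_map (hcomm : ∀ w, q (ι w) = (t w).map ι) {occ : Finset (Fin m)}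
    {occ' : Finset (Fin k)} (hocc : ∀ w, w ∈ occ' ↔ ι w ∈ occ) (f : ℕ) (v : Fin k) :
    drive q occ f (ι v) = (drive t occ' f v).map ι := by
  induction f generalizing v with
  | zero => rfl
  | succ f ih =>
    by_cases hv : v ∈ occ'
    · rw [drive_mem ((hocc v).1 hv), drive_mem hv, hcomm]
      cases hq : t v with
      | none => rfl
      | some u => simp only [Option.map_some, Option.bind_some]; exact ih u
    · rw [drive_not_mem (fun h => hv ((hocc v).2 h)), drive_not_mem hv]; rfl

lemma pstep_iter_map (hcomm : ∀ w, q (ι w) = (t w).map ι) (i : ℕ) (v : Fin k) :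
    (pstep q)^[i] (some (ι v)) = ((pstep t)^[i] (some v)).map ι := by
  induction i generalizing v with
  | zero => rfl
  | succ i ih =>
    rw [Function.iterate_succ_apply, Function.iterate_succ_apply, pstep_some, pstep_some,
      hcomm]
    cases hq : t v with
    | none => simp [iter_pstep_none]
    | some u => exact ih u

lemma forest_map (hcomm : ∀ w, q (ι w) = (t w).map ι) (hq : IsRootedForest q) :
    IsRootedForest t := by
  intro v
  apply forest_bound (N := m)
  have h := pstep_iter_map hcomm m v
  rw [hq (ι v)] at h
  exact (Option.map_eq_none_iff).1 h.symm

lemma parkAll_map_isSome (hι : Function.Injective ι)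
    (hcomm : ∀ w, q (ι w) = (t w).map ι) (ht : IsRootedForest t) (hkm : k ≤ m)
    (l : List (Fin k)) :
    ∀ (occ : Finset (Fin m)) (occ' : Finset (Fin k)), (∀ w, w ∈ occ' ↔ ι w ∈ occ) →
      ((parkAll q occ (l.map ι)).isSome ↔ (parkAll t occ' l).isSome) := by
  induction l with
  | nil => intro occ occ' h; simp [parkAll_nil]
  | cons v rest ih =>
    intro occ occ' hocc
    rw [List.map_cons, parkAll_cons, parkAll_cons,
      drive_map hcomm hocc m v, drive_fuel_congr (ht v) hkm]
    cases hd : drive t occ' k v with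
    | none => simp
    | some s =>
      simp only [Option.map_some, Option.bind_some]
      exact ih (insert (ι s) occ) (insert s occ')
        (fun w => by
          simp only [Finset.mem_insert, hocc w]
          constructor
          · rintro (rfl | h) <;> [exact Or.inl rfl; exact Or.inr h]
          · rintro (h | h) <;> [exact Or.inl (hι h); exact Or.inr h])

end Sim

section TreeForest
variable {m : ℕ}

/-- Remove the root `r` from a tree on `Fin (m+1)`, leaving a forest on `Fin m`. -/
def toForest (p : Fin (m + 1) → Option (Fin (m + 1))) (r : Fin (m + 1)) :
    Fin m → Option (Fin m) :=
  fun w => (p (r.succAbove w)).bind (finSuccEquiv' r)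

/-- Attach a root `r` below a forest on `Fin m`, producing a tree on `Fin (m+1)`. -/
def ofForest (t : Fin m → Option (Fin m)) (r : Fin (m + 1)) :
    Fin (m + 1) → Option (Fin (m + 1)) :=
  fun v => match finSuccEquiv' r v with
  | none => none
  | some w => some ((t w).elim r r.succAbove)

variable {p : Fin (m + 1) → Option (Fin (m + 1))} {t : Fin m → Option (Fin m)}
  {r : Fin (m + 1)}

/-- The compatibility condition between a tree `p` with root `r` and forest `t`. -/
def RootRel (p : Fin (m + 1) → Option (Fin (m + 1))) (t : Fin m → Option (Fin m))
    (r : Fin (m + 1)) : Prop :=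
  ∀ w, p (r.succAbove w) = some ((t w).elim r r.succAbove)

lemma rootRel_ofForest : RootRel (ofForest t r) t r := by
  intro w
  simp [ofForest, finSuccEquiv'_succAbove]

lemma rootRel_toForest (hne : ∀ v, v ≠ r → p v ≠ none) : RootRel p (toForest p r) r := by
  intro w
  have h1 : r.succAbove w ≠ r := Fin.succAbove_ne r w
  cases hp : p (r.succAbove w) with
  | none => exact absurd hp (hne _ h1)
  | some x =>
    unfold toForest
    rw [hp, Option.bind_some]
    by_cases hx : x = r
    · subst hx; simp
    · obtain ⟨u, hu⟩ := Fin.exists_succAbove_eq hx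
      rw [← hu]; simp

lemma rootRel_chain_up (hq : RootRel p t r) :
    ∀ i v w, (pstep t)^[i] (some v) = some w →
      (pstep p)^[i] (some (r.succAbove v)) = some (r.succAbove w) := by
  intro i
  induction i with
  | zero => intro v w h; cases h; rfl
  | succ i ih =>
    intro v w h
    rw [Function.iterate_succ_apply, pstep_some] at h
    cases htv : t v with
    | none => rw [htv, iter_pstep_none] at h; cases h
    | some u =>
      rw [htv] at h
      rw [Function.iterate_succ_apply, pstep_some, hq v, htv]
      exact ih u w h

lemma forest_toForest (hq : RootRel p t r) (hp : IsRootedForest p) : IsRootedForest t := by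
  intro v
  cases h : (pstep t)^[m] (some v) with
  | none => rfl
  | some w =>
    have h1 := rootRel_chain_up hq m v w h
    have h2 : (pstep p)^[m + 1] (some (r.succAbove v)) = none := hp _
    rw [Function.iterate_succ_apply', h1, pstep_some] at h2
    rw [hq w] at h2
    cases h2

lemma rootRel_chain_down (hq : RootRel p t r) (hr : p r = none) :
    ∀ i v, (pstep t)^[i] (some v) = none →
      (pstep p)^[i + 1] (some (r.succAbove v)) = none := by
  intro i
  induction i with
  | zero => intro v h; cases h
  | succ i ih =>
    intro v h
    rw [Function.iterate_succ_apply, pstep_some] at h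
    rw [Function.iterate_succ_apply, pstep_some, hq v]
    cases htv : t v with
    | none =>
      show (pstep p)^[i + 1] (some r) = none
      rw [Function.iterate_succ_apply, pstep_some, hr, iter_pstep_none]
    | some u =>
      show (pstep p)^[i + 1] (some (r.succAbove u)) = none
      rw [htv] at h
      exact ih u h

lemma forest_ofForest (hq : RootRel p t r) (hr : p r = none) (ht : IsRootedForest t) :
    IsRootedForest p := by
  intro v
  by_cases hv : v = r
  · have h1 : (pstep p)^[1] (some v) = none := by
      rw [Function.iterate_one, pstep_some, hv, hr]
    exact iter_pstep_none_mono (show 1 ≤ m + 1 by omega) h1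
  · obtain ⟨w, hw⟩ := Fin.exists_succAbove_eq hv
    rw [← hw]
    exact rootRel_chain_down hq hr m w (ht w)

lemma rootRel_drive_up (hq : RootRel p t r) {occ : Finset (Fin (m + 1))}
    {occ' : Finset (Fin m)} (hocc : ∀ w, w ∈ occ' ↔ r.succAbove w ∈ occ) :
    ∀ f g v s, f ≤ g → drive t occ' f v = some s →
      drive p occ g (r.succAbove v) = some (r.succAbove s) := by
  intro f
  induction f with
  | zero => intro g v s _ h; simp [drive] at h
  | succ f ih =>
    intro g v s hfg h
    obtain ⟨g, rfl⟩ : ∃ g', g = g' + 1 := ⟨g - 1, by omega⟩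
    by_cases hv : v ∈ occ'
    · rw [drive_mem hv] at h
      cases htv : t v with
      | none => rw [htv, Option.bind_none] at h; cases h
      | some u =>
        rw [htv, Option.bind_some] at h
        rw [drive_mem ((hocc v).1 hv), hq v, htv, Option.bind_some]
        exact ih g u s (by omega) h
    · rw [drive_not_mem hv] at h
      cases h
      rw [drive_not_mem (fun hm => hv ((hocc v).2 hm))]

lemma rootRel_drive_down (hq : RootRel p t r) {occ : Finset (Fin (m + 1))}
    {occ' : Finset (Fin m)} (hocc : ∀ w, w ∈ occ' ↔ r.succAbove w ∈ occ) (hr : r ∉ occ) :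
    ∀ f v s, drive p occ f (r.succAbove v) = some s → s ≠ r →
      ∃ u, s = r.succAbove u ∧ drive t occ' f v = some u := by
  intro f
  induction f with
  | zero => intro v s h; simp [drive] at h
  | succ f ih =>
    intro v s h hsr
    by_cases hv : v ∈ occ'
    · rw [drive_mem ((hocc v).1 hv), hq v, Option.bind_some] at h
      cases htv : t v with
      | none =>
        rw [htv] at h
        simp only [Option.elim] at h
        exfalso
        cases f with
        | zero => simp [drive] at h
        | succ f' =>
          rw [drive_not_mem hr] at h
          cases h
          exact hsr rfl
      | some u =>
        rw [htv] at h
        simp only [Option.elim] at h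
        obtain ⟨u', hu1, hu2⟩ := ih u s h hsr
        exact ⟨u', hu1, by rw [drive_mem hv, htv, Option.bind_some]; exact hu2⟩
    · rw [drive_not_mem (fun hm => hv ((hocc v).2 hm))] at h
      cases h
      exact ⟨v, rfl, by rw [drive_not_mem hv]⟩

lemma rootRel_parkAll_up (hq : RootRel p t r) :
    ∀ (l : List (Fin m)) (occ : Finset (Fin (m + 1))) (occ' : Finset (Fin m))
      (S' : Finset (Fin m)),
      (∀ w, w ∈ occ' ↔ r.succAbove w ∈ occ) → r ∉ occ →
      parkAll t occ' l = some S' →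
      ∃ S, parkAll p occ (l.map r.succAbove) = some S ∧ r ∉ S := by
  intro l
  induction l with
  | nil => intro occ occ' S' hocc hr h; exact ⟨occ, rfl, hr⟩
  | cons v rest ih =>
    intro occ occ' S' hocc hr h
    rw [parkAll_cons] at h
    cases hd : drive t occ' m v with
    | none => rw [hd] at h; cases h
    | some s =>
      rw [hd, Option.bind_some] at h
      rw [List.map_cons, parkAll_cons,
        rootRel_drive_up hq hocc m (m + 1) v s (by omega) hd, Option.bind_some]
      exact ih (insert (r.succAbove s) occ) (insert s occ') S'
        (fun w => by
          simp only [Finset.mem_insert, hocc w]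
          constructor
          · rintro (rfl | h') <;> [exact Or.inl rfl; exact Or.inr h']
          · rintro (h' | h') <;>
              [exact Or.inl (Fin.succAbove_right_injective h'); exact Or.inr h'])
        (by
          simp only [Finset.mem_insert]
          rintro (h' | h')
          · exact (Fin.succAbove_ne r s) h'.symm
          · exact hr h')
        h

lemma rootRel_parkAll_down (hq : RootRel p t r) (ht : IsRootedForest t) :
    ∀ (l : List (Fin m)) (occ : Finset (Fin (m + 1))) (occ' : Finset (Fin m))
      (S : Finset (Fin (m + 1))),
      (∀ w, w ∈ occ' ↔ r.succAbove w ∈ occ) → r ∉ occ →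
      parkAll p occ (l.map r.succAbove) = some S → r ∉ S →
      (parkAll t occ' l).isSome := by
  intro l
  induction l with
  | nil => intro occ occ' S hocc hr h hrS; simp [parkAll_nil]
  | cons v rest ih =>
    intro occ occ' S hocc hr h hrS
    rw [List.map_cons, parkAll_cons] at h
    cases hd : drive p occ (m + 1) (r.succAbove v) with
    | none => rw [hd] at h; cases h
    | some s =>
      rw [hd, Option.bind_some] at h
      have hsS : s ∈ S := parkAll_subset h (Finset.mem_insert_self s occ)
      have hsr : s ≠ r := fun h' => hrS (h' ▸ hsS)
      obtain ⟨u, rfl, hu⟩ := rootRel_drive_down hq hocc hr (m + 1) v s hd hsr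
      have hu' : drive t occ' m v = some u := by
        rw [drive_fuel_congr (ht v) (by omega : m ≤ m + 1)] at hu
        exact hu
      rw [parkAll_cons, hu', Option.bind_some]
      exact ih (insert (r.succAbove u) occ) (insert u occ') S
        (fun w => by
          simp only [Finset.mem_insert, hocc w]
          constructor
          · rintro (rfl | h') <;> [exact Or.inl rfl; exact Or.inr h']
          · rintro (h' | h') <;>
              [exact Or.inl (Fin.succAbove_right_injective h'); exact Or.inr h'])
        (by
          simp only [Finset.mem_insert]
          rintro (h' | h')
          · exact (Fin.succAbove_ne r u) h'.symm
          · exact hr h')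
        h hrS

lemma parkAll_avoid_root {n : ℕ} {p : Fin n → Option (Fin n)} {r : Fin n} :
    ∀ (l : List (Fin n)) (occ S : Finset (Fin n)),
      parkAll p occ l = some S → r ∉ S → r ∉ occ → ∀ x ∈ l, x ≠ r := by
  intro l
  induction l with
  | nil => intro occ S h hrS hro x hx; cases hx
  | cons v rest ih =>
    intro occ S h hrS hro x hx
    rw [parkAll_cons] at h
    cases hd : drive p occ n v with
    | none => rw [hd] at h; cases h
    | some s =>
      rw [hd, Option.bind_some] at h
      have hsS : s ∈ S := parkAll_subset h (Finset.mem_insert_self s occ)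
      have hsr : s ≠ r := fun h' => hrS (h' ▸ hsS)
      rcases List.mem_cons.1 hx with rfl | hx'
      · intro hvr
        subst hvr
        obtain ⟨n', rfl⟩ : ∃ n', n = n' + 1 := ⟨n - 1, by omega⟩
        rw [drive_not_mem hro] at hd
        cases hd
        exact hsr rfl
      · exact ih (insert s occ) S h hrS
          (by simp only [Finset.mem_insert]; rintro (h' | h') <;>
            [exact hsr h'.symm; exact hro h']) x hx'

end TreeForest

section E1
variable {m : ℕ}

/-- Fully parked forests on `Fin m` with `m` cars, all parking. -/
def FPFtype (m : ℕ) :=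
  {qb : (Fin m → Option (Fin m)) × (Fin m → Fin m) //
    IsRootedForest qb.1 ∧ (parkAll qb.1 ∅ (List.ofFn qb.2)).isSome}

noncomputable def FPF (m : ℕ) : ℕ := Nat.card (FPFtype m)

lemma ofForest_root {t : Fin m → Option (Fin m)} {r : Fin (m + 1)} :
    ofForest t r r = none := by
  simp [ofForest]

lemma ofForest_eq_none_iff {t : Fin m → Option (Fin m)} {r v : Fin (m + 1)} :
    ofForest t r v = none ↔ v = r := by
  constructor
  · intro h
    by_contra hv
    obtain ⟨w, hw⟩ := Fin.exists_succAbove_eq hv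
    rw [← hw, rootRel_ofForest w] at h
    cases h
  · rintro rfl; exact ofForest_root

lemma toForest_ofForest {t : Fin m → Option (Fin m)} {r : Fin (m + 1)} :
    toForest (ofForest t r) r = t := by
  funext w
  show (ofForest t r (r.succAbove w)).bind (finSuccEquiv' r) = t w
  rw [rootRel_ofForest w, Option.bind_some]
  cases htw : t w with
  | none => simp
  | some u => simp

lemma ofForest_toForest {p : Fin (m + 1) → Option (Fin (m + 1))} {r : Fin (m + 1)}
    (hr : p r = none) (hne : ∀ v, v ≠ r → p v ≠ none) :
    ofForest (toForest p r) r = p := by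
  funext v
  by_cases hv : v = r
  · subst hv; rw [ofForest_root, hr]
  · obtain ⟨w, hw⟩ := Fin.exists_succAbove_eq hv
    rw [← hw, rootRel_ofForest w]
    exact (rootRel_toForest hne w).symm

def carDown (r : Fin (m + 1)) (a : Fin m → Fin (m + 1)) (i : Fin m) : Fin m :=
  ((finSuccEquiv' r) (a i)).getD ⟨0, i.pos⟩

lemma succAbove_carDown {r : Fin (m + 1)} {a : Fin m → Fin (m + 1)} {i : Fin m}
    (h : a i ≠ r) : r.succAbove (carDown r a i) = a i := by
  obtain ⟨w, hw⟩ := Fin.exists_succAbove_eq h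
  rw [carDown, ← hw, finSuccEquiv'_succAbove]
  rfl

lemma bwd_mem (r : Fin (m + 1)) (t : Fin m → Option (Fin m)) (b : Fin m → Fin m)
    (ht : IsRootedForest t) (hpark : (parkAll t ∅ (List.ofFn b)).isSome) :
    IsRootedTree (ofForest t r) ∧ ∃ occ,
      parkAll (ofForest t r) ∅ (List.ofFn fun i => r.succAbove (b i)) = some occ ∧
        ∀ z, ofForest t r z = none → z ∉ occ := by
  constructor
  · exact ⟨forest_ofForest rootRel_ofForest ofForest_root ht,
      r, ofForest_root, fun z hz => ofForest_eq_none_iff.1 hz⟩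
  · obtain ⟨S', hS'⟩ := Option.isSome_iff_exists.1 hpark
    obtain ⟨S, hS, hrS⟩ := rootRel_parkAll_up rootRel_ofForest (List.ofFn b) ∅ ∅ S'
      (by simp) (Finset.notMem_empty r) hS'
    refine ⟨S, ?_, fun z hz => ?_⟩
    · have hl : (List.ofFn fun i => r.succAbove (b i)) = (List.ofFn b).map r.succAbove := by
        rw [List.map_ofFn]; rfl
      rw [hl]; exact hS
    · rw [ofForest_eq_none_iff.1 hz]; exact hrS

lemma PFroot_succ (m : ℕ) : PFroot (m + 1) m = (m + 1) * FPF m := by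
  classical
  have hb : Function.Bijective (fun z : Fin (m + 1) × FPFtype m =>
      (⟨(ofForest z.2.1.1 z.1, fun i => z.1.succAbove (z.2.1.2 i)),
        bwd_mem z.1 z.2.1.1 z.2.1.2 z.2.2.1 z.2.2.2⟩ :
        {q : (Fin (m + 1) → Option (Fin (m + 1))) × (Fin m → Fin (m + 1)) //
          IsRootedTree q.1 ∧ ∃ occ : Finset (Fin (m + 1)),
            parkAll q.1 ∅ (List.ofFn q.2) = some occ ∧
              ∀ r, q.1 r = none → r ∉ occ})) := by
    constructor
    · rintro ⟨r, ⟨⟨t, b⟩, ht, hp⟩⟩ ⟨r', ⟨⟨t', b'⟩, ht', hp'⟩⟩ heq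
      simp only [Subtype.mk.injEq, Prod.mk.injEq] at heq
      obtain ⟨hpeq, hbeq⟩ := heq
      have hrr : r = r' := by
        have h1 : ofForest t r r = none := ofForest_root
        rw [hpeq] at h1
        exact ofForest_eq_none_iff.1 h1
      subst hrr
      have htt : t = t' := by
        rw [← toForest_ofForest (t := t) (r := r), hpeq, toForest_ofForest]
      have hbb : b = b' := funext fun i => Fin.succAbove_right_injective (congrFun hbeq i)
      subst htt; subst hbb; rfl
    · rintro ⟨⟨p, a⟩, htree, S, hS, hroot⟩
      obtain ⟨hfor, r, hr, hru⟩ := htree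
      have hrS : r ∉ S := hroot r hr
      have hne : ∀ v, v ≠ r → p v ≠ none := fun v hv hnone => hv (hru v hnone)
      have hcars : ∀ i, a i ≠ r := fun i =>
        parkAll_avoid_root _ _ _ hS hrS (Finset.notMem_empty r) (a i)
          (by simp [List.mem_ofFn])
      have hqrel : RootRel p (toForest p r) r := rootRel_toForest hne
      have htfor : IsRootedForest (toForest p r) := forest_toForest hqrel hfor
      have hlmap : (List.ofFn (carDown r a)).map r.succAbove = List.ofFn a := by
        rw [List.map_ofFn]
        exact congrArg List.ofFn (funext fun i => succAbove_carDown (hcars i))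
      have hdown : (parkAll (toForest p r) ∅ (List.ofFn (carDown r a))).isSome := by
        apply rootRel_parkAll_down hqrel htfor (List.ofFn (carDown r a)) ∅ ∅ S
          (by simp) (Finset.notMem_empty r) _ hrS
        rw [hlmap]; exact hS
      refine ⟨⟨r, ⟨(toForest p r, carDown r a), htfor, hdown⟩⟩, ?_⟩
      apply Subtype.ext
      show (ofForest (toForest p r) r, fun i => r.succAbove (carDown r a i)) = (p, a)
      refine Prod.ext ?_ ?_
      · show ofForest (toForest p r) r = p
        exact ofForest_toForest hr hne
      · exact funext fun i => succAbove_carDown (hcars i)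
  have hcard := Nat.card_eq_of_bijective _ hb
  rw [Nat.card_prod] at hcard
  rw [show Nat.card (Fin (m + 1)) = m + 1 by
    simp [Nat.card_eq_fintype_card]] at hcard
  unfold PFroot FPF
  exact hcard.symm

end E1

section RootOf
variable {M : ℕ} {q : Fin M → Option (Fin M)}

def treeGo (q : Fin M → Option (Fin M)) : ℕ → Fin M → Fin M
  | 0, v => v
  | f + 1, v => match q v with
    | none => v
    | some u => treeGo q f u

def rootOf (q : Fin M → Option (Fin M)) (v : Fin M) : Fin M := treeGo q M v

lemma treeGo_congr {f g : ℕ} {v : Fin M} (hf : (pstep q)^[f] (some v) = none)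
    (hfg : f ≤ g) : treeGo q g v = treeGo q f v := by
  induction f generalizing v g with
  | zero => simp at hf
  | succ f ih =>
    obtain ⟨g, rfl⟩ : ∃ g', g = g' + 1 := ⟨g - 1, by omega⟩
    show (match q v with | none => v | some u => treeGo q g u) =
      (match q v with | none => v | some u => treeGo q f u)
    cases hq : q v with
    | none => rfl
    | some u =>
      have hf' : (pstep q)^[f] (some u) = none := by
        rw [Function.iterate_succ_apply, pstep_some, hq] at hf; exact hf
      exact ih hf' (by omega)

lemma treeGo_succ_of_some {f : ℕ} {v u : Fin M} (h : q v = some u) :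
    treeGo q (f + 1) v = treeGo q f u := by
  show (match q v with | none => v | some u => treeGo q f u) = treeGo q f u
  rw [h]

lemma treeGo_succ_of_none {f : ℕ} {v : Fin M} (h : q v = none) :
    treeGo q (f + 1) v = v := by
  show (match q v with | none => v | some u => treeGo q f u) = v
  rw [h]

lemma treeGo_none_fix {v : Fin M} (h : q v = none) (f : ℕ) : treeGo q f v = v := by
  cases f with
  | zero => rfl
  | succ f => exact treeGo_succ_of_none h

lemma rootOf_eq_self {v : Fin M} (h : q v = none) : rootOf q v = v :=
  treeGo_none_fix h M

lemma iter_peel {v u : Fin M} {f : ℕ} (h : q v = some u)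
    (hf : (pstep q)^[f] (some v) = none) : (pstep q)^[f - 1] (some u) = none := by
  cases f with
  | zero => simp at hf
  | succ f =>
    rw [Function.iterate_succ_apply, pstep_some, h] at hf
    simpa using hf

lemma treeGo_step {v u : Fin M} (h : q v = some u) {f : ℕ} (hf : f ≠ 0)
    (hdie : (pstep q)^[f - 1] (some u) = none) : treeGo q f v = treeGo q f u := by
  cases f with
  | zero => exact absurd rfl hf
  | succ f =>
    rw [treeGo_succ_of_some h]
    exact (treeGo_congr (by simpa using hdie) (by omega)).symm

lemma rootOf_step (hq : IsRootedForest q) {v u : Fin M} (h : q v = some u) :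
    rootOf q v = rootOf q u := by
  have hv := hq v
  have hM : M ≠ 0 := fun h0 => absurd v.2 (by omega)
  exact treeGo_step h hM (iter_peel h hv)

lemma rootOf_spec (hq : IsRootedForest q) (v : Fin M) : q (rootOf q v) = none := by
  suffices h : ∀ f (v : Fin M), (pstep q)^[f] (some v) = none → q (treeGo q f v) = none by
    exact h M v (hq v)
  intro f
  induction f with
  | zero => intro v hv; simp at hv
  | succ f ih =>
    intro v hv
    cases hqv : q v with
    | none => rw [treeGo_succ_of_none hqv]; exact hqv
    | some u =>
      rw [treeGo_succ_of_some hqv]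
      apply ih
      rw [Function.iterate_succ_apply, pstep_some, hqv] at hv
      exact hv

/-- Component of `v`: all vertices with the same root. -/
def compOf (q : Fin M → Option (Fin M)) (v : Fin M) : Finset (Fin M) :=
  Finset.univ.filter fun w => rootOf q w = rootOf q v

lemma mem_compOf {v w : Fin M} : w ∈ compOf q v ↔ rootOf q w = rootOf q v := by
  simp [compOf]

lemma self_mem_compOf {v : Fin M} : v ∈ compOf q v := mem_compOf.2 rfl

lemma compOf_closed (hq : IsRootedForest q) (v : Fin M) : PClosed q (compOf q v) := by
  intro w hw u hu
  rw [mem_compOf] at hw ⊢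
  rw [← rootOf_step hq hu]; exact hw

lemma compOf_compl_closed (hq : IsRootedForest q) (v : Fin M) :
    PClosed q (compOf q v)ᶜ := by
  intro w hw u hu
  rw [Finset.mem_compl, mem_compOf] at hw ⊢
  rw [← rootOf_step hq hu]; exact hw

end RootOf

section EmbIdx
variable {m k : ℕ}

def embF (A : Finset (Fin m)) (hA : A.card = k) (i : Fin k) : Fin m :=
  A.orderEmbOfFin hA i

lemma embF_mem {A : Finset (Fin m)} {hA : A.card = k} (i : Fin k) : embF A hA i ∈ A :=
  Finset.orderEmbOfFin_mem A hA i

lemma embF_inj {A : Finset (Fin m)} {hA : A.card = k} :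
    Function.Injective (embF A hA) := (A.orderEmbOfFin hA).injective

def idxF (A : Finset (Fin m)) (hA : A.card = k) (x : Fin m) (hx : x ∈ A) : Fin k :=
  (A.orderIsoOfFin hA).symm ⟨x, hx⟩

lemma embF_idxF {A : Finset (Fin m)} {hA : A.card = k} {x : Fin m} (hx : x ∈ A) :
    embF A hA (idxF A hA x hx) = x := by
  show ((A.orderIsoOfFin hA) ((A.orderIsoOfFin hA).symm ⟨x, hx⟩) : Fin m) = x
  rw [OrderIso.apply_symm_apply]

lemma idxF_embF {A : Finset (Fin m)} {hA : A.card = k} (i : Fin k) :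
    idxF A hA (embF A hA i) (embF_mem i) = i := by
  apply embF_inj (hA := hA)
  rw [embF_idxF]

lemma compl_card {A : Finset (Fin m)} (hA : A.card = k) : Aᶜ.card = m - k := by
  rw [Finset.card_compl, hA, Fintype.card_fin]

/-- Combine data on `C` and on `Cᶜ` into data on everything. -/
def glueFun {α : Type*} (C : Finset (Fin m)) (hC : C.card = k) (f : Fin k → α)
    (g : Fin (m - k) → α) (x : Fin m) : α :=
  if hx : x ∈ C then f (idxF C hC x hx)
  else g (idxF Cᶜ (compl_card hC) x (Finset.mem_compl.2 hx))

lemma glueFun_emb_left {α : Type*} {C : Finset (Fin m)} {hC : C.card = k}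
    {f : Fin k → α} {g : Fin (m - k) → α} (i : Fin k) :
    glueFun C hC f g (embF C hC i) = f i := by
  rw [glueFun, dif_pos (embF_mem i), idxF_embF]

lemma glueFun_emb_right {α : Type*} {C : Finset (Fin m)} {hC : C.card = k}
    {f : Fin k → α} {g : Fin (m - k) → α} (j : Fin (m - k)) :
    glueFun C hC f g (embF Cᶜ (compl_card hC) j) = g j := by
  have hmem : embF Cᶜ (compl_card hC) j ∈ Cᶜ := embF_mem j
  rw [glueFun, dif_neg (Finset.mem_compl.1 hmem), idxF_embF]

def restrictF (q : Fin m → Option (Fin m)) (A : Finset (Fin m)) (hA : A.card = k)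
    (w : Fin k) : Option (Fin k) :=
  (q (embF A hA w)).bind fun x => if hx : x ∈ A then some (idxF A hA x hx) else none

lemma restrictF_comm {q : Fin m → Option (Fin m)} {A : Finset (Fin m)} {hA : A.card = k}
    (hcl : PClosed q A) (w : Fin k) :
    q (embF A hA w) = (restrictF q A hA w).map (embF A hA) := by
  cases hq : q (embF A hA w) with
  | none => simp [restrictF, hq]
  | some u =>
    have hu : u ∈ A := hcl _ (embF_mem w) u hq
    simp [restrictF, hq, dif_pos hu, embF_idxF]

end EmbIdx

section ListFilter
variable {M k : ℕ} {α : Type*}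

lemma filter_finRange_eq_sort (C : Finset (Fin M)) :
    (List.finRange M).filter (fun x => x ∈ C) = C.sort (· ≤ ·) := by
  refine (fun hp h1 h2 => List.Perm.eq_of_pairwise' (r := (· ≤ ·)) h1 h2 hp) ?_ ?_ ?_
  · apply List.perm_of_nodup_nodup_toFinset_eq
    · exact (List.nodup_finRange M).filter _
    · exact Finset.sort_nodup _ _
    · ext x
      simp [List.mem_filter, List.mem_finRange, Finset.mem_sort]
  · exact List.Pairwise.sublist List.filter_sublist (List.pairwise_le_finRange M)
  · exact Finset.pairwise_sort _ _

lemma map_sort_eq_ofFn (b : Fin M → α) (C : Finset (Fin M)) (hC : C.card = k) :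
    (C.sort (· ≤ ·)).map b = List.ofFn (fun i : Fin k => b (embF C hC i)) := by
  apply List.ext_getElem
  · simp [Finset.length_sort, hC]
  · intro n h1 h2
    simp only [List.getElem_map, List.getElem_ofFn, embF, Finset.orderEmbOfFin_apply]
    rfl

lemma ofFn_filter_eq (b : Fin M → α) (p : α → Bool) (C : Finset (Fin M)) (hC : C.card = k)
    (hP : ∀ pos, p (b pos) = true ↔ pos ∈ C) :
    (List.ofFn b).filter p = List.ofFn (fun i : Fin k => b (embF C hC i)) := by
  rw [List.ofFn_eq_map, List.filter_map]
  have h1 : (List.finRange M).filter (p ∘ b) =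
      (List.finRange M).filter (fun x => x ∈ C) := by
    apply List.filter_congr
    intro x _
    have h := hP x
    cases hpb : p (b x) <;> simp_all
  rw [h1, filter_finRange_eq_sort, map_sort_eq_ofFn b C hC]

lemma length_ofFn_filter (b : Fin M → α) (p : α → Bool) :
    ((List.ofFn b).filter p).length =
      (Finset.univ.filter fun i : Fin M => p (b i) = true).card := by
  rw [List.ofFn_eq_map, List.filter_map, List.length_map]
  rw [← List.toFinset_card_of_nodup ((List.nodup_finRange M).filter _)]
  congr 1
  ext x
  simp [List.mem_filter, List.mem_finRange, Function.comp]

lemma length_filter_add (l : List α) (p : α → Bool) :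
    (l.filter p).length + (l.filter fun x => !p x).length = l.length := by
  have h2 := (List.filter_append_perm p l).length_eq
  simpa [List.length_append] using h2

end ListFilter

section RootMap
variable {K M : ℕ} {t : Fin K → Option (Fin K)} {q : Fin M → Option (Fin M)}
  {ι : Fin K → Fin M}

lemma treeGo_map (hcomm : ∀ w, q (ι w) = (t w).map ι) :
    ∀ (f : ℕ) (w : Fin K), treeGo q f (ι w) = ι (treeGo t f w) := by
  intro f
  induction f with
  | zero => intro w; rfl
  | succ f ih =>
    intro w
    cases htw : t w with
    | none =>
      have : q (ι w) = none := by rw [hcomm w, htw]; rfl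
      rw [treeGo_succ_of_none this, treeGo_succ_of_none htw]
    | some u =>
      have : q (ι w) = some (ι u) := by rw [hcomm w, htw]; rfl
      rw [treeGo_succ_of_some this, treeGo_succ_of_some htw]
      exact ih u

lemma rootOf_map (hcomm : ∀ w, q (ι w) = (t w).map ι) (ht : IsRootedForest t)
    (hKM : K ≤ M) (w : Fin K) : rootOf q (ι w) = ι (rootOf t w) := by
  rw [rootOf, treeGo_map hcomm M w, rootOf, treeGo_congr (ht w) hKM]

end RootMap

section Glue
variable {m k : ℕ}

def glueForest (A : Finset (Fin m)) (hA : A.card = k) (t : Fin k → Option (Fin k))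
    (t' : Fin (m - k) → Option (Fin (m - k))) : Fin m → Option (Fin m) :=
  glueFun A hA (fun w => (t w).map (embF A hA))
    (fun w => (t' w).map (embF Aᶜ (compl_card hA)))

def glueCars (A : Finset (Fin m)) (hA : A.card = k) (C : Finset (Fin m)) (hC : C.card = k)
    (c : Fin k → Fin k) (c' : Fin (m - k) → Fin (m - k)) : Fin m → Fin m :=
  glueFun C hC (fun j => embF A hA (c j)) (fun j => embF Aᶜ (compl_card hA) (c' j))

variable {A : Finset (Fin m)} {hA : A.card = k} {t : Fin k → Option (Fin k)}
  {t' : Fin (m - k) → Option (Fin (m - k))}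

lemma glueForest_comm_left (w : Fin k) :
    glueForest A hA t t' (embF A hA w) = (t w).map (embF A hA) :=
  glueFun_emb_left w

lemma glueForest_comm_right (w : Fin (m - k)) :
    glueForest A hA t t' (embF Aᶜ (compl_card hA) w) = (t' w).map (embF Aᶜ (compl_card hA)) :=
  glueFun_emb_right w

lemma glueForest_closed_left : PClosed (glueForest A hA t t') A := by
  intro x hx u hu
  rw [glueForest, glueFun, dif_pos hx] at hu
  obtain ⟨a, _, ha2⟩ := Option.map_eq_some_iff.1 hu
  rw [← ha2]; exact embF_mem a

lemma glueForest_closed_right : PClosed (glueForest A hA t t') Aᶜ := by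
  intro x hx u hu
  rw [glueForest, glueFun, dif_neg (Finset.mem_compl.1 hx)] at hu
  obtain ⟨a, _, ha2⟩ := Option.map_eq_some_iff.1 hu
  rw [← ha2]; exact embF_mem a

lemma exists_embF {x : Fin m} (hx : x ∈ A) : ∃ w, embF A hA w = x :=
  ⟨idxF A hA x hx, embF_idxF hx⟩

lemma glueForest_forest (hk : k ≤ m) (ht : IsRootedForest t) (ht' : IsRootedForest t') :
    IsRootedForest (glueForest A hA t t') := by
  intro v
  by_cases hv : v ∈ A
  · obtain ⟨w, rfl⟩ := exists_embF (hA := hA) hv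
    rw [pstep_iter_map glueForest_comm_left m w,
      iter_pstep_none_mono hk (ht w)]
    rfl
  · obtain ⟨w, rfl⟩ := exists_embF (A := Aᶜ) (hA := compl_card hA) (Finset.mem_compl.2 hv)
    rw [pstep_iter_map glueForest_comm_right m w,
      iter_pstep_none_mono (by omega : m - k ≤ m) (ht' w)]
    rfl

lemma restrictF_glueForest_left : restrictF (glueForest A hA t t') A hA = t := by
  funext w
  rw [restrictF, glueForest_comm_left]
  cases htw : t w with
  | none => rfl
  | some u => simp [dif_pos (embF_mem u), idxF_embF]

lemma restrictF_glueForest_right :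
    restrictF (glueForest A hA t t') Aᶜ (compl_card hA) = t' := by
  funext w
  rw [restrictF, glueForest_comm_right]
  cases htw : t' w with
  | none => rfl
  | some u =>
    have hmem : embF Aᶜ (compl_card hA) u ∈ Aᶜ := embF_mem u
    simp [dif_pos hmem, idxF_embF, Finset.mem_compl.1 hmem]

lemma compOf_glueForest (hk : k ≤ m) (htree : IsRootedTree t) (ht' : IsRootedForest t')
    (i : Fin k) : compOf (glueForest A hA t t') (embF A hA i) = A := by
  obtain ⟨ht, r0, hr0, hr0u⟩ := htree
  have hroot : ∀ w, rootOf t w = r0 := fun w => hr0u _ (rootOf_spec ht w)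
  have hL : ∀ w, rootOf (glueForest A hA t t') (embF A hA w) = embF A hA r0 := by
    intro w
    rw [rootOf_map glueForest_comm_left ht hk w, hroot w]
  ext x
  rw [mem_compOf, hL i]
  constructor
  · intro hx
    by_contra hxA
    obtain ⟨w, rfl⟩ := exists_embF (A := Aᶜ) (hA := compl_card hA) (Finset.mem_compl.2 hxA)
    rw [rootOf_map glueForest_comm_right ht' (by omega : m - k ≤ m) w] at hx
    have h1 : embF Aᶜ (compl_card hA) (rootOf t' w) ∈ Aᶜ := embF_mem _
    have h2 : embF A hA r0 ∈ A := embF_mem _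
    rw [hx] at h1
    exact Finset.mem_compl.1 h1 h2
  · intro hx
    obtain ⟨w, rfl⟩ := exists_embF (hA := hA) hx
    exact hL w

variable {C : Finset (Fin m)} {hC : C.card = k} {c : Fin k → Fin k}
  {c' : Fin (m - k) → Fin (m - k)}

lemma glueCars_mem_iff (pos : Fin m) :
    glueCars A hA C hC c c' pos ∈ A ↔ pos ∈ C := by
  by_cases hp : pos ∈ C
  · simp only [glueCars, glueFun, dif_pos hp]
    exact iff_of_true (embF_mem _) hp
  · simp only [glueCars, glueFun, dif_neg hp]
    exact iff_of_false (Finset.mem_compl.1 (embF_mem _)) hp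

lemma glueCars_filter_left :
    (List.ofFn (glueCars A hA C hC c c')).filter (fun x => x ∈ A) =
      (List.ofFn c).map (embF A hA) := by
  rw [ofFn_filter_eq _ _ C hC (fun pos => by
    simpa using glueCars_mem_iff (hA := hA) (hC := hC) (c := c) (c' := c') pos)]
  rw [List.map_ofFn]
  apply congrArg List.ofFn
  funext j
  show glueCars A hA C hC c c' (embF C hC j) = embF A hA (c j)
  exact glueFun_emb_left j

lemma glueCars_filter_right :
    (List.ofFn (glueCars A hA C hC c c')).filter (fun x => x ∉ A) =
      (List.ofFn c').map (embF Aᶜ (compl_card hA)) := by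
  rw [ofFn_filter_eq _ _ Cᶜ (compl_card hC) (fun pos => by
    rw [decide_eq_true_eq, Finset.mem_compl]
    exact not_congr (glueCars_mem_iff (hA := hA) (hC := hC) (c := c) (c' := c') pos))]
  rw [List.map_ofFn]
  apply congrArg List.ofFn
  funext j
  show glueCars A hA C hC c c' (embF Cᶜ (compl_card hC) j) = embF Aᶜ (compl_card hA) (c' j)
  exact glueFun_emb_right j

lemma glueCars_emb_left (j : Fin k) :
    glueCars A hA C hC c c' (embF C hC j) = embF A hA (c j) :=
  glueFun_emb_left j

lemma glueCars_emb_right (j : Fin (m - k)) :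
    glueCars A hA C hC c c' (embF Cᶜ (compl_card hC) j) = embF Aᶜ (compl_card hA) (c' j) :=
  glueFun_emb_right j

end Glue

section Fiber
variable {m k : ℕ}

def PFtype (k : ℕ) :=
  {qb : (Fin k → Option (Fin k)) × (Fin k → Fin k) //
    IsRootedTree qb.1 ∧ (parkAll qb.1 ∅ (List.ofFn qb.2)).isSome}

instance : Finite (PFtype k) := by unfold PFtype; infer_instance
instance : Finite (FPFtype k) := by unfold FPFtype; infer_instance

lemma card_le {A : Finset (Fin m)} (hA : A.card = k) : k ≤ m := by
  rw [← hA]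
  calc A.card ≤ Finset.univ.card := Finset.card_le_univ A
  _ = m := by simp

lemma glueForest_restrictF {q : Fin m → Option (Fin m)} {A : Finset (Fin m)}
    {hA : A.card = k} (hclA : PClosed q A) (hclB : PClosed q Aᶜ) :
    glueForest A hA (restrictF q A hA) (restrictF q Aᶜ (compl_card hA)) = q := by
  funext x
  by_cases hx : x ∈ A
  · show (if hx : x ∈ A then _ else _) = q x
    rw [dif_pos hx, ← restrictF_comm hclA (idxF A hA x hx), embF_idxF]
  · show (if hx : x ∈ A then _ else _) = q x
    rw [dif_neg hx, ← restrictF_comm hclB (idxF Aᶜ (compl_card hA) x (Finset.mem_compl.2 hx)),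
      embF_idxF]

lemma glue_mem (A : Finset (Fin m)) (hA : A.card = k) (C : Finset (Fin m)) (hC : C.card = k)
    (t : Fin k → Option (Fin k)) (c : Fin k → Fin k)
    (t' : Fin (m - k) → Option (Fin (m - k))) (c' : Fin (m - k) → Fin (m - k))
    (htree : IsRootedTree t) (hcp : (parkAll t ∅ (List.ofFn c)).isSome)
    (hfor' : IsRootedForest t') (hcp' : (parkAll t' ∅ (List.ofFn c')).isSome) :
    IsRootedForest (glueForest A hA t t') ∧
      (parkAll (glueForest A hA t t') ∅
        (List.ofFn (glueCars A hA C hC c c'))).isSome := by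
  have hk : k ≤ m := card_le hA
  refine ⟨glueForest_forest hk htree.1 hfor', ?_⟩
  rw [parkAll_split glueForest_closed_left glueForest_closed_right
    (List.ofFn (glueCars A hA C hC c c')) ∅ ∅ ∅ (by simp) (by simp)]
  constructor
  · rw [show (List.ofFn (glueCars A hA C hC c c')).filter (· ∈ A) =
      (List.ofFn c).map (embF A hA) from glueCars_filter_left]
    rw [parkAll_map_isSome embF_inj glueForest_comm_left htree.1 hk (List.ofFn c) ∅ ∅
      (by simp)]
    exact hcp
  · rw [show (List.ofFn (glueCars A hA C hC c c')).filter (· ∉ A) =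
      (List.ofFn c').map (embF Aᶜ (compl_card hA)) from glueCars_filter_right]
    rw [parkAll_map_isSome embF_inj glueForest_comm_right hfor' (by omega : m - k ≤ m)
      (List.ofFn c') ∅ ∅ (by simp)]
    exact hcp'

def Tgt (m k : ℕ) : Type :=
  {A : Finset (Fin m) // A.card = k} × {C : Finset (Fin m) // C.card = k} × Fin k ×
    PFtype k × FPFtype (m - k)

def gFun (z : Tgt m k) : {x : Fin m × FPFtype m // (compOf x.2.1.1 x.1).card = k} :=
  ⟨(embF z.1.1 z.1.2 z.2.2.1,
    ⟨(glueForest z.1.1 z.1.2 z.2.2.2.1.1.1 z.2.2.2.2.1.1,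
      glueCars z.1.1 z.1.2 z.2.1.1 z.2.1.2 z.2.2.2.1.1.2 z.2.2.2.2.1.2),
      glue_mem z.1.1 z.1.2 z.2.1.1 z.2.1.2 _ _ _ _ z.2.2.2.1.2.1 z.2.2.2.1.2.2
        z.2.2.2.2.2.1 z.2.2.2.2.2.2⟩),
    by
      rw [compOf_glueForest (card_le z.1.2) z.2.2.2.1.2.1 z.2.2.2.2.2.1 z.2.2.1]
      exact z.1.2⟩

lemma gFun_bij : Function.Bijective (gFun (m := m) (k := k)) := by
  constructor
  · rintro ⟨⟨A₁, hA₁⟩, ⟨C₁, hC₁⟩, i₁, ⟨⟨t₁, c₁⟩, htr₁, hcp₁⟩, ⟨⟨t₁', c₁'⟩, hfr₁, hcq₁⟩⟩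
      ⟨⟨A₂, hA₂⟩, ⟨C₂, hC₂⟩, i₂, ⟨⟨t₂, c₂⟩, htr₂, hcp₂⟩, ⟨⟨t₂', c₂'⟩, hfr₂, hcq₂⟩⟩ heq
    have hval := congrArg Subtype.val heq
    simp only [gFun, Prod.mk.injEq] at hval
    obtain ⟨hv, hQB⟩ := Prod.mk.inj hval
    have hQB' := congrArg Subtype.val hQB
    simp only [Prod.mk.injEq] at hQB'
    obtain ⟨hQ, hB⟩ := hQB'
    -- A₁ = A₂
    have hAA : A₁ = A₂ := by
      have h1 : compOf (glueForest A₁ hA₁ t₁ t₁') (embF A₁ hA₁ i₁) = A₁ :=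
        compOf_glueForest (card_le hA₁) ⟨htr₁.1, htr₁.2⟩ hfr₁ i₁
      have h2 : compOf (glueForest A₂ hA₂ t₂ t₂') (embF A₂ hA₂ i₂) = A₂ :=
        compOf_glueForest (card_le hA₂) ⟨htr₂.1, htr₂.2⟩ hfr₂ i₂
      rw [← h1, ← h2, hQ, hv]
    subst hAA
    have hCC : C₁ = C₂ := by
      ext pos
      rw [← glueCars_mem_iff (hA := hA₁) (hC := hC₁) (c := c₁) (c' := c₁') pos,
        ← glueCars_mem_iff (hA := hA₂) (hC := hC₂) (c := c₂) (c' := c₂') pos, hB]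
    subst hCC
    have htt : t₁ = t₂ := by
      rw [← restrictF_glueForest_left (hA := hA₁) (t := t₁) (t' := t₁'), hQ]
      exact restrictF_glueForest_left
    have htt' : t₁' = t₂' := by
      rw [← restrictF_glueForest_right (hA := hA₁) (t := t₁) (t' := t₁'), hQ]
      exact restrictF_glueForest_right
    have hcc : c₁ = c₂ := by
      funext j
      apply embF_inj (hA := hA₁)
      rw [← glueCars_emb_left (hA := hA₁) (hC := hC₁) (c := c₁) (c' := c₁') j, hB]
      exact glueCars_emb_left j
    have hcc' : c₁' = c₂' := by
      funext j
      apply embF_inj (hA := compl_card hA₁)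
      rw [← glueCars_emb_right (hA := hA₁) (hC := hC₁) (c := c₁) (c' := c₁') j, hB]
      exact glueCars_emb_right j
    have hii : i₁ = i₂ := embF_inj (hA := hA₁) hv
    subst htt; subst htt'; subst hcc; subst hcc'; subst hii
    rfl
  · rintro ⟨⟨v, ⟨⟨q, b⟩, hfor, hpark⟩⟩, hfib⟩
    dsimp only at hfor hpark hfib
    have hA : (compOf q v).card = k := hfib
    set A := compOf q v with hAdef
    have hclA : PClosed q A := compOf_closed hfor v
    have hclB : PClosed q Aᶜ := compOf_compl_closed hfor v
    have hk : k ≤ m := card_le hA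
    have hcommA : ∀ w, q (embF A hA w) = (restrictF q A hA w).map (embF A hA) :=
      restrictF_comm hclA
    have hcommB : ∀ w, q (embF Aᶜ (compl_card hA) w) =
        (restrictF q Aᶜ (compl_card hA) w).map (embF Aᶜ (compl_card hA)) :=
      restrictF_comm hclB
    have hforA : IsRootedForest (restrictF q A hA) := forest_map hcommA hfor
    have hforB : IsRootedForest (restrictF q Aᶜ (compl_card hA)) := forest_map hcommB hfor
    have hr0mem : rootOf q v ∈ A := mem_compOf.2 (rootOf_eq_self (rootOf_spec hfor v))
    have htree : IsRootedTree (restrictF q A hA) := by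
      refine ⟨hforA, idxF A hA (rootOf q v) hr0mem, ?_, ?_⟩
      · have h1 := hcommA (idxF A hA (rootOf q v) hr0mem)
        rw [embF_idxF, rootOf_spec hfor v] at h1
        exact (Option.map_eq_none_iff).1 h1.symm
      · intro y hy
        have h2 := hcommA y
        rw [hy] at h2
        simp only [Option.map_none] at h2
        have h3 : rootOf q (embF A hA y) = embF A hA y := rootOf_eq_self h2
        have h5 : rootOf q (embF A hA y) = rootOf q v := mem_compOf.1 (embF_mem y)
        apply embF_inj (hA := hA)
        rw [embF_idxF, ← h5, h3]
    -- split the parking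
    obtain ⟨hpA, hpB⟩ := (parkAll_split hclA hclB (List.ofFn b) ∅ ∅ ∅
      (by simp) (by simp)).1 hpark
    -- the car set C
    set C := Finset.univ.filter (fun pos => b pos ∈ A) with hCdef
    have hCiff : ∀ pos, b pos ∈ A ↔ pos ∈ C := by intro pos; simp [hCdef]
    obtain ⟨SA, hSA⟩ := Option.isSome_iff_exists.1 hpA
    obtain ⟨SB, hSB⟩ := Option.isSome_iff_exists.1 hpB
    have hSAsub : SA ⊆ A := by
      intro s hs
      rcases parkAll_spots hclA (fun x hx => by
          simpa using (List.mem_filter.1 hx).2) hSA s hs with h | h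
      · exact absurd h (Finset.notMem_empty s)
      · exact h
    have hSBsub : SB ⊆ Aᶜ := by
      intro s hs
      rcases parkAll_spots hclB (fun x hx => by
          have := (List.mem_filter.1 hx).2
          simp only [decide_eq_true_eq] at this
          exact Finset.mem_compl.2 this) hSB s hs with h | h
      · exact absurd h (Finset.notMem_empty s)
      · exact h
    have hlenA : ((List.ofFn b).filter (· ∈ A)).length = C.card := by
      rw [length_ofFn_filter]
      congr 1
      ext pos
      simp [hCdef]
    have hcardSA : SA.card = ((List.ofFn b).filter (· ∈ A)).length := by
      have := parkAll_card hSA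
      simpa using this
    have hcardSB : SB.card = ((List.ofFn b).filter (· ∉ A)).length := by
      have := parkAll_card hSB
      simpa using this
    have hsum : ((List.ofFn b).filter (· ∈ A)).length +
        ((List.ofFn b).filter (· ∉ A)).length = m := by
      have h1 := length_filter_add (List.ofFn b) (fun x => decide (x ∈ A))
      have h2 : (fun x : Fin m => !decide (x ∈ A)) = (fun x => decide (x ∉ A)) := by
        funext x; simp [decide_not]
      rw [h2] at h1
      simpa using h1
    have hC : C.card = k := by
      have h1 : SA.card ≤ k := by rw [← hA]; exact Finset.card_le_card hSAsub
      have h2 : SB.card ≤ m - k := by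
        rw [← compl_card hA]; exact Finset.card_le_card hSBsub
      omega
    -- cars
    have hbmem : ∀ j : Fin k, b (embF C hC j) ∈ A := fun j => (hCiff _).2 (embF_mem j)
    have hbmem' : ∀ j : Fin (m - k), b (embF Cᶜ (compl_card hC) j) ∈ Aᶜ := by
      intro j
      have hj : embF Cᶜ (compl_card hC) j ∈ Cᶜ := embF_mem j
      refine Finset.mem_compl.2 fun hmem => ?_
      exact Finset.mem_compl.1 hj ((hCiff _).1 hmem)
    set c : Fin k → Fin k := fun j => idxF A hA (b (embF C hC j)) (hbmem j) with hcdef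
    set c' : Fin (m - k) → Fin (m - k) :=
      fun j => idxF Aᶜ (compl_card hA) (b (embF Cᶜ (compl_card hC) j)) (hbmem' j) with hc'def
    have hfA : (List.ofFn b).filter (· ∈ A) = (List.ofFn c).map (embF A hA) := by
      rw [ofFn_filter_eq b _ C hC (fun pos => by simpa using (hCiff pos))]
      rw [List.map_ofFn]
      apply congrArg List.ofFn
      funext j
      show b (embF C hC j) = embF A hA (c j)
      rw [hcdef, embF_idxF]
    have hfB : (List.ofFn b).filter (· ∉ A) =
        (List.ofFn c').map (embF Aᶜ (compl_card hA)) := by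
      rw [ofFn_filter_eq b _ Cᶜ (compl_card hC) (fun pos => by
        rw [decide_eq_true_eq, Finset.mem_compl]
        exact not_congr (hCiff pos))]
      rw [List.map_ofFn]
      apply congrArg List.ofFn
      funext j
      show b (embF Cᶜ (compl_card hC) j) = embF Aᶜ (compl_card hA) (c' j)
      rw [hc'def, embF_idxF]
    have hcpA : (parkAll (restrictF q A hA) ∅ (List.ofFn c)).isSome := by
      rw [← parkAll_map_isSome embF_inj hcommA hforA hk (List.ofFn c) ∅ ∅ (by simp)]
      rw [← hfA]
      exact hpA
    have hcpB : (parkAll (restrictF q Aᶜ (compl_card hA)) ∅ (List.ofFn c')).isSome := by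
      rw [← parkAll_map_isSome embF_inj hcommB hforB (by omega : m - k ≤ m)
        (List.ofFn c') ∅ ∅ (by simp)]
      rw [← hfB]
      exact hpB
    refine ⟨(⟨A, hA⟩, ⟨C, hC⟩, idxF A hA v self_mem_compOf,
      ⟨(restrictF q A hA, c), htree, hcpA⟩,
      ⟨(restrictF q Aᶜ (compl_card hA), c'), hforB, hcpB⟩), ?_⟩
    apply Subtype.ext
    show (embF A hA (idxF A hA v self_mem_compOf), _) = (v, _)
    have hglueF : glueForest A hA (restrictF q A hA) (restrictF q Aᶜ (compl_card hA)) = q :=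
      glueForest_restrictF hclA hclB
    have hglueC : glueCars A hA C hC c c' = b := by
      funext pos
      by_cases hp : pos ∈ C
      · show (if hx : pos ∈ C then _ else _) = b pos
        rw [dif_pos hp]
        show embF A hA (c (idxF C hC pos hp)) = b pos
        rw [hcdef]
        show embF A hA (idxF A hA (b (embF C hC (idxF C hC pos hp))) _) = b pos
        rw [embF_idxF, embF_idxF]
      · show (if hx : pos ∈ C then _ else _) = b pos
        rw [dif_neg hp]
        show embF Aᶜ (compl_card hA) (c' (idxF Cᶜ (compl_card hC) pos
          (Finset.mem_compl.2 hp))) = b pos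
        rw [hc'def]
        show embF Aᶜ (compl_card hA) (idxF Aᶜ (compl_card hA)
          (b (embF Cᶜ (compl_card hC) (idxF Cᶜ (compl_card hC) pos
            (Finset.mem_compl.2 hp)))) _) = b pos
        rw [embF_idxF, embF_idxF]
    refine Prod.ext (embF_idxF self_mem_compOf) (Subtype.ext ?_)
    show (glueForest A hA (restrictF q A hA) (restrictF q Aᶜ (compl_card hA)),
      glueCars A hA C hC c c') = (q, b)
    rw [hglueF, hglueC]

end Fiber

section Count

lemma nat_card_sigma {N : ℕ} (β : Fin N → Type*) [∀ i, Finite (β i)] :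
    Nat.card (Σ i, β i) = ∑ i, Nat.card (β i) := by
  classical
  letI : ∀ i, Fintype (β i) := fun i => Fintype.ofFinite _
  simp [Nat.card_eq_fintype_card, Fintype.card_sigma]

lemma card_fiber (m k : ℕ) :
    Nat.card {x : Fin m × FPFtype m // (compOf x.2.1.1 x.1).card = k} =
      Nat.choose m k * (Nat.choose m k * (k * (PF k k * FPF (m - k)))) := by
  rw [← Nat.card_eq_of_bijective _ (gFun_bij (m := m) (k := k))]
  show Nat.card (Tgt m k) = _
  unfold Tgt
  rw [Nat.card_prod, Nat.card_prod, Nat.card_prod, Nat.card_prod]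
  congr 1
  · rw [Nat.card_eq_fintype_card, Fintype.card_finset_len, Fintype.card_fin]
  congr 1
  · rw [Nat.card_eq_fintype_card, Fintype.card_finset_len, Fintype.card_fin]
  congr 1
  · simp [Nat.card_eq_fintype_card]

lemma marked_card (m : ℕ) :
    m * FPF m = ∑ k ∈ Finset.range (m + 1),
      Nat.choose m k * (Nat.choose m k * (k * (PF k k * FPF (m - k)))) := by
  classical
  have hf : ∀ x : Fin m × FPFtype m, (compOf x.2.1.1 x.1).card < m + 1 := by
    intro x
    have := Finset.card_le_univ (compOf x.2.1.1 x.1)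
    simp only [Finset.card_univ, Fintype.card_fin] at this
    omega
  set f : Fin m × FPFtype m → Fin (m + 1) := fun x => ⟨(compOf x.2.1.1 x.1).card, hf x⟩
    with hfdef
  have h1 : Nat.card (Fin m × FPFtype m) = ∑ j : Fin (m + 1), Nat.card {x // f x = j} := by
    rw [Nat.card_congr (Equiv.sigmaFiberEquiv f).symm, nat_card_sigma]
  have h2 : ∀ j : Fin (m + 1), Nat.card {x // f x = j} =
      Nat.card {x : Fin m × FPFtype m // (compOf x.2.1.1 x.1).card = (j : ℕ)} := by
    intro j
    apply Nat.card_congr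
    apply Equiv.subtypeEquivRight
    intro x
    rw [hfdef, Fin.ext_iff]
  have h3 : Nat.card (Fin m × FPFtype m) = m * FPF m := by
    rw [Nat.card_prod]
    congr 1
    simp [Nat.card_eq_fintype_card]
  rw [← h3, h1]
  rw [Finset.sum_congr rfl fun j _ => (h2 j).trans (card_fiber m (j : ℕ))]
  rw [Fin.sum_univ_eq_sum_range (fun k => Nat.choose m k * (Nat.choose m k *
    (k * (PF k k * FPF (m - k))))) (m + 1)]

lemma FPF_zero : FPF 0 = 1 := by
  haveI : Subsingleton (FPFtype 0) := by unfold FPFtype; infer_instance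
  haveI : Nonempty (FPFtype 0) := by
    refine ⟨⟨(fun v => v.elim0, fun v => v.elim0), fun v => v.elim0, ?_⟩⟩
    rw [show List.ofFn (fun v : Fin 0 => v.elim0) = [] from List.ofFn_zero]
    rfl
  exact Nat.card_unique

end Count

section Analytic
open PowerSeries

lemma Fser_coeff_zero : (coeff 0) Fser = 0 := by
  rw [Fser, coeff_mk]
  simp

lemma Fser_coeff_pos {k : ℕ} (hk : k ≠ 0) :
    (coeff k) Fser = (PF k k : ℚ) / (Nat.factorial k : ℚ) ^ 2 := by
  rw [Fser, coeff_mk, if_neg hk]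

lemma coeff_pow_succ (j m : ℕ) (G : PowerSeries ℚ) :
    (coeff m) (G ^ (j + 1)) =
      ∑ k ∈ Finset.range (m + 1), (coeff k) G * (coeff (m - k)) (G ^ j) := by
  rw [pow_succ, mul_comm, coeff_mul, Finset.Nat.sum_antidiagonal_eq_sum_range_succ_mk]

lemma coeff_pow_eq_zero : ∀ (j d : ℕ), d < j → (coeff d) (Fser ^ j) = 0 := by
  intro j
  induction j with
  | zero => intro d hd; omega
  | succ j ih =>
    intro d hd
    rw [coeff_pow_succ]
    apply Finset.sum_eq_zero
    intro k hk
    rcases Nat.eq_zero_or_pos k with rfl | hkpos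
    · rw [Fser_coeff_zero, zero_mul]
    · have hk' : k ≤ d := by simp at hk; omega
      rw [ih (d - k) (by omega), mul_zero]

lemma sum_triangle_swap (n : ℕ) (F : ℕ → ℕ → ℚ) :
    ∑ k ∈ Finset.range (n + 1), ∑ l ∈ Finset.range (n - k + 1), F k l
      = ∑ l ∈ Finset.range (n + 1), ∑ k ∈ Finset.range (n - l + 1), F k l := by
  rw [Finset.sum_sigma', Finset.sum_sigma']
  apply Finset.sum_bij' (fun (p : Σ _ : ℕ, ℕ) _ => (⟨p.2, p.1⟩ : Σ _ : ℕ, ℕ))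
    (fun (p : Σ _ : ℕ, ℕ) _ => (⟨p.2, p.1⟩ : Σ _ : ℕ, ℕ))
  · intro a ha
    simp only [Finset.mem_sigma, Finset.mem_range] at ha ⊢
    omega
  · intro a ha
    simp only [Finset.mem_sigma, Finset.mem_range] at ha ⊢
    omega
  · intro a _; rfl
  · intro a _; rfl
  · intro a _; rfl

lemma key_id : ∀ (j m : ℕ), (m : ℚ) * (coeff m) (Fser ^ (j + 1)) =
    ((j : ℚ) + 1) * ∑ k ∈ Finset.range (m + 1),
      (k : ℚ) * (coeff k) Fser * (coeff (m - k)) (Fser ^ j) := by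
  intro j
  induction j with
  | zero =>
    intro m
    have h1 : ∑ k ∈ Finset.range (m + 1), (k : ℚ) * (coeff k) Fser *
        (coeff (m - k)) (Fser ^ 0) = (m : ℚ) * (coeff m) Fser := by
      rw [pow_zero]
      rw [Finset.sum_eq_single m]
      · simp
      · intro k hk hkm
        have : m - k ≠ 0 := by simp at hk; omega
        simp [coeff_one, this]
      · intro h; simp at h
    rw [h1, pow_one]
    ring
  | succ j ih =>
    intro m
    rw [coeff_pow_succ (j + 1) m, Finset.mul_sum]
    have hsplit : ∀ k ∈ Finset.range (m + 1),
        (m : ℚ) * ((coeff k) Fser * (coeff (m - k)) (Fser ^ (j + 1)))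
        = (k : ℚ) * (coeff k) Fser * (coeff (m - k)) (Fser ^ (j + 1))
          + (coeff k) Fser * (((m - k : ℕ) : ℚ) * (coeff (m - k)) (Fser ^ (j + 1))) := by
      intro k hk
      have hkm : k ≤ m := by simp at hk; omega
      have hm : (m : ℚ) = (k : ℚ) + ((m - k : ℕ) : ℚ) := by
        rw [Nat.cast_sub hkm]; ring
      rw [hm]; ring
    rw [Finset.sum_congr rfl hsplit, Finset.sum_add_distrib]
    have h2 : ∑ k ∈ Finset.range (m + 1),
        (coeff k) Fser * (((m - k : ℕ) : ℚ) * (coeff (m - k)) (Fser ^ (j + 1)))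
        = ((j : ℚ) + 1) * ∑ k ∈ Finset.range (m + 1),
            (k : ℚ) * (coeff k) Fser * (coeff (m - k)) (Fser ^ (j + 1)) := by
      have hih : ∀ k ∈ Finset.range (m + 1),
          (coeff k) Fser * (((m - k : ℕ) : ℚ) * (coeff (m - k)) (Fser ^ (j + 1)))
          = ((j : ℚ) + 1) * ∑ l ∈ Finset.range (m - k + 1),
              (coeff k) Fser * ((l : ℚ) * (coeff l) Fser *
                (coeff (m - k - l)) (Fser ^ j)) := by
        intro k _
        rw [ih (m - k), mul_left_comm, Finset.mul_sum]
      rw [Finset.sum_congr rfl hih, ← Finset.mul_sum]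
      congr 1
      rw [sum_triangle_swap m (fun k l => (coeff k) Fser *
        ((l : ℚ) * (coeff l) Fser * (coeff (m - k - l)) (Fser ^ j)))]
      apply Finset.sum_congr rfl
      intro l hl
      have hlm : l ≤ m := by simp at hl; omega
      have hco : ∑ k ∈ Finset.range (m - l + 1),
          (coeff k) Fser * (coeff (m - l - k)) (Fser ^ j)
          = (coeff (m - l)) (Fser ^ (j + 1)) := by
        rw [coeff_pow_succ]
      calc ∑ k ∈ Finset.range (m - l + 1), (coeff k) Fser *
            ((l : ℚ) * (coeff l) Fser * (coeff (m - k - l)) (Fser ^ j))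
          = (l : ℚ) * (coeff l) Fser * ∑ k ∈ Finset.range (m - l + 1),
              (coeff k) Fser * (coeff (m - l - k)) (Fser ^ j) := by
            rw [Finset.mul_sum]
            apply Finset.sum_congr rfl
            intro k _
            rw [show m - k - l = m - l - k by omega]
            ring
        _ = (l : ℚ) * (coeff l) Fser * (coeff (m - l)) (Fser ^ (j + 1)) := by rw [hco]
    rw [h2]
    push_cast
    ring

/-- The coefficients of `expComp Fser`. -/
noncomputable def eC (m : ℕ) : ℚ :=
  ∑ j ∈ Finset.range (m + 1), (coeff m) (Fser ^ j) / (Nat.factorial j : ℚ)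

lemma eC_zero : eC 0 = 1 := by
  rw [eC]
  simp [coeff_one]

lemma eC_rec (m : ℕ) (hm : m ≠ 0) :
    (m : ℚ) * eC m = ∑ k ∈ Finset.range (m + 1),
      (k : ℚ) * (coeff k) Fser * eC (m - k) := by
  rw [eC, Finset.mul_sum]
  rw [Finset.sum_range_succ']
  have h0 : (m : ℚ) * ((coeff m) (Fser ^ 0) / (Nat.factorial 0 : ℚ)) = 0 := by
    rw [pow_zero, coeff_one, if_neg hm]
    simp
  rw [h0, add_zero]
  have h1 : ∀ i, (m : ℚ) * ((coeff m) (Fser ^ (i + 1)) / (Nat.factorial (i + 1) : ℚ))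
      = (∑ k ∈ Finset.range (m + 1), (k : ℚ) * (coeff k) Fser *
          (coeff (m - k)) (Fser ^ i)) / (Nat.factorial i : ℚ) := by
    intro i
    rw [← mul_div_assoc, key_id i m]
    rw [Nat.factorial_succ, Nat.cast_mul, Nat.cast_add, Nat.cast_one]
    have hi : ((i : ℚ) + 1) ≠ 0 := by positivity
    have hf : (Nat.factorial i : ℚ) ≠ 0 := Nat.cast_ne_zero.2 (Nat.factorial_ne_zero i)
    field_simp
  rw [Finset.sum_congr rfl fun i _ => h1 i]
  calc ∑ i ∈ Finset.range m, (∑ k ∈ Finset.range (m + 1), (k : ℚ) * (coeff k) Fser *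
        (coeff (m - k)) (Fser ^ i)) / (Nat.factorial i : ℚ)
      = ∑ i ∈ Finset.range m, ∑ k ∈ Finset.range (m + 1), (k : ℚ) * (coeff k) Fser *
          (coeff (m - k)) (Fser ^ i) / (Nat.factorial i : ℚ) := by
        apply Finset.sum_congr rfl
        intro i _
        rw [Finset.sum_div]
    _ = ∑ k ∈ Finset.range (m + 1), ∑ i ∈ Finset.range m, (k : ℚ) * (coeff k) Fser *
          (coeff (m - k)) (Fser ^ i) / (Nat.factorial i : ℚ) := Finset.sum_comm
    _ = ∑ k ∈ Finset.range (m + 1), (k : ℚ) * (coeff k) Fser * eC (m - k) := by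
        apply Finset.sum_congr rfl
        intro k hk
        rcases Nat.eq_zero_or_pos k with rfl | hkpos
        · simp
        · have hkm : k ≤ m := by simp at hk; omega
          have hsub : Finset.range (m - k + 1) ⊆ Finset.range m := by
            intro x hx
            simp only [Finset.mem_range] at hx ⊢
            omega
          have hvan : ∀ x ∈ Finset.range m, x ∉ Finset.range (m - k + 1) →
              (k : ℚ) * (coeff k) Fser * (coeff (m - k)) (Fser ^ x) /
                (Nat.factorial x : ℚ) = 0 := by
            intro x _ hx
            simp only [Finset.mem_range] at hx
            rw [coeff_pow_eq_zero x (m - k) (by omega)]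
            simp
          rw [← Finset.sum_subset hsub hvan, eC, Finset.mul_sum]
          apply Finset.sum_congr rfl
          intro i _
          rw [mul_div_assoc]

end Analytic

section Final
open PowerSeries

noncomputable def Rr (m : ℕ) : ℚ := (FPF m : ℚ) / (Nat.factorial m : ℚ) ^ 2

lemma R_rec (m : ℕ) : (m : ℚ) * Rr m =
    ∑ k ∈ Finset.range (m + 1), (k : ℚ) * (coeff k) Fser * Rr (m - k) := by
  have hcast := congrArg (fun n : ℕ => (n : ℚ)) (marked_card m)
  push_cast at hcast
  rw [Rr, ← mul_div_assoc, hcast, Finset.sum_div]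
  apply Finset.sum_congr rfl
  intro k hk
  rcases Nat.eq_zero_or_pos k with rfl | hkpos
  · simp
  · have hkm : k ≤ m := by simp at hk; omega
    rw [Fser_coeff_pos (by omega), Rr]
    rw [Nat.cast_choose ℚ hkm]
    have h1 : (Nat.factorial m : ℚ) ≠ 0 := Nat.cast_ne_zero.2 (Nat.factorial_ne_zero m)
    have h2 : (Nat.factorial k : ℚ) ≠ 0 := Nat.cast_ne_zero.2 (Nat.factorial_ne_zero k)
    have h3 : (Nat.factorial (m - k) : ℚ) ≠ 0 :=
      Nat.cast_ne_zero.2 (Nat.factorial_ne_zero (m - k))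
    field_simp

lemma Rr_eq_eC : ∀ m, Rr m = eC m := by
  intro m
  induction m using Nat.strong_induction_on with
  | _ m ih =>
    rcases Nat.eq_zero_or_pos m with rfl | hm
    · rw [eC_zero, Rr, FPF_zero]
      simp
    · have h1 := R_rec m
      have h2 := eC_rec m (by omega)
      have h3 : ∀ k ∈ Finset.range (m + 1), (k : ℚ) * (coeff k) Fser * Rr (m - k)
          = (k : ℚ) * (coeff k) Fser * eC (m - k) := by
        intro k _
        rcases Nat.eq_zero_or_pos k with rfl | hkpos
        · simp
        · rw [ih (m - k) (by omega)]
      rw [Finset.sum_congr rfl h3] at h1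
      have h4 : (m : ℚ) * Rr m = (m : ℚ) * eC m := by rw [h1, h2]
      exact mul_left_cancel₀ (Nat.cast_ne_zero.2 (by omega)) h4

theorem stmt13' : Nser = PowerSeries.X * expComp Fser := by
  ext n
  cases n with
  | zero =>
    rw [Nser, coeff_mk, if_pos rfl]
    rw [coeff_zero_eq_constantCoeff, map_mul, constantCoeff_X, zero_mul]
  | succ j =>
    rw [coeff_succ_X_mul]
    rw [Nser, coeff_mk, if_neg (Nat.succ_ne_zero j)]
    rw [expComp, coeff_mk]
    show (PFroot (j + 1) j : ℚ) / ((Nat.factorial (j + 1) : ℚ) *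
      (Nat.factorial j : ℚ)) = _
    rw [PFroot_succ j]
    rw [show (∑ i ∈ Finset.range (j + 1), (coeff j) (Fser ^ i) /
      (Nat.factorial i : ℚ)) = eC j from rfl]
    have := Rr_eq_eC j
    rw [Rr] at this
    rw [← this]
    rw [Nat.factorial_succ]
    have h1 : (Nat.factorial j : ℚ) ≠ 0 := Nat.cast_ne_zero.2 (Nat.factorial_ne_zero j)
    have h2 : ((j : ℚ) + 1) ≠ 0 := by positivity
    push_cast
    field_simp

end Final

/-- The EGFs of nearly and fully parked trees satisfy `N(x) = x · exp(F(x))`. -/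
theorem stmt13 : Nser = PowerSeries.X * expComp Fser :=
  stmt13'
end
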